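/- arXiv:1606.06886 — 2 statements merged into one kernel-verified Lean document; each statement's English description precedes it below -/
import Mathlib

section
/- Let p ≥ 3 be a real number and let u : ℝ³ × [0,∞) → ℝ be a C³ solution of ∂ₜ²u − Δu + |∂ₜu|^{p−1}∂ₜu = 0 that is radially symmetric in x and spatially compactly supported on compact time intervals, with radial profile f(r,t) = u(r e₁, t). Set M = max( sup_{r>0}|(∂ₜ + ∂ᵣ)(r ∂ₜf)(r,0)|, sup_{r>0}|(∂ₜ − ∂ᵣ)(r ∂ₜf)(r,0)| ). Then for all r > 0 and t ≥ 0: r|∂ₜ²f(r,t)| ≤ M, |∂ₜf(r,t)| ≤ M, and r|∂ᵣ∂ₜf(r,t)| ≤ 2M. -/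
open MeasureTheory Set Real
open scoped ENNReal

noncomputable section

/-- Euclidean space ℝ³. -/
abbrev E3 : Type := EuclideanSpace ℝ (Fin 3)

/-- Time derivative ∂ₜ of a function of (x, t) ∈ ℝ³ × ℝ. -/
def pt (u : E3 × ℝ → ℝ) : E3 × ℝ → ℝ := fun z => fderiv ℝ u z ((0 : E3), (1 : ℝ))

/-- Spatial partial derivative ∂_{x i}. -/
def px (i : Fin 3) (u : E3 × ℝ → ℝ) : E3 × ℝ → ℝ :=
  fun z => fderiv ℝ u z (EuclideanSpace.single i 1, (0 : ℝ))

/-- Spatial Laplacian Δ (in the x variables). -/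
def lap (u : E3 × ℝ → ℝ) : E3 × ℝ → ℝ := fun z => ∑ i : Fin 3, px i (px i u) z

/-- `u` is spatially compactly supported on compact time intervals. -/
def SpatialCptSupp (u : E3 × ℝ → ℝ) : Prop :=
  ∀ T : ℝ, 0 < T → ∃ R > (0 : ℝ), ∀ (x : E3) (t : ℝ),
    R ≤ ‖x‖ → 0 ≤ t → t ≤ T → u (x, t) = 0

/-- `u` is radially symmetric in `x` (for nonnegative times). -/
def RadialIn (u : E3 × ℝ → ℝ) : Prop :=
  ∀ (x y : E3) (t : ℝ), 0 ≤ t → ‖x‖ = ‖y‖ → u (x, t) = u (y, t)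

/-- Partial derivative in the first variable of a function on ℝ × ℝ. -/
def d1 (g : ℝ × ℝ → ℝ) : ℝ × ℝ → ℝ := fun z => fderiv ℝ g z ((1 : ℝ), (0 : ℝ))

/-- Partial derivative in the second variable of a function on ℝ × ℝ. -/
def d2 (g : ℝ × ℝ → ℝ) : ℝ × ℝ → ℝ := fun z => fderiv ℝ g z ((0 : ℝ), (1 : ℝ))

/-- A fixed unit vector in ℝ³. -/
def e1 : E3 := EuclideanSpace.single 0 1

/-- The radial profile `f(r, t) = u(r e₁, t)` of a function on ℝ³ × ℝ. -/
def prof (u : E3 × ℝ → ℝ) : ℝ × ℝ → ℝ := fun z => u (z.1 • e1, z.2)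

/-- `X₊(r,t) = (∂ₜ + ∂ᵣ)(r ∂ₜ f(r,t))` for the radial profile `f` of `u`. -/
def Xplus (u : E3 × ℝ → ℝ) : ℝ × ℝ → ℝ := fun z =>
  d2 (fun w : ℝ × ℝ => w.1 * d2 (prof u) w) z + d1 (fun w : ℝ × ℝ => w.1 * d2 (prof u) w) z

/-- `X₋(r,t) = (∂ₜ − ∂ᵣ)(r ∂ₜ f(r,t))` for the radial profile `f` of `u`. -/
def Xminus (u : E3 × ℝ → ℝ) : ℝ × ℝ → ℝ := fun z =>
  d2 (fun w : ℝ × ℝ => w.1 * d2 (prof u) w) z - d1 (fun w : ℝ × ℝ => w.1 * d2 (prof u) w) z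

-- ===================== auxiliary lemmas =====================

private lemma hasDerivAt_d1 {g : ℝ × ℝ → ℝ} {r t : ℝ} (hg : DifferentiableAt ℝ g (r, t)) :
    HasDerivAt (fun ρ : ℝ => g (ρ, t)) (d1 g (r, t)) r := by
  have h1 : HasDerivAt (fun ρ : ℝ => ((ρ : ℝ), t)) ((1 : ℝ), (0 : ℝ)) r :=
    (hasDerivAt_id r).prodMk (hasDerivAt_const r t)
  exact hg.hasFDerivAt.comp_hasDerivAt r h1

private lemma hasDerivAt_d2 {g : ℝ × ℝ → ℝ} {r t : ℝ} (hg : DifferentiableAt ℝ g (r, t)) :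
    HasDerivAt (fun τ : ℝ => g (r, τ)) (d2 g (r, t)) t := by
  have h1 : HasDerivAt (fun τ : ℝ => ((r : ℝ), τ)) ((0 : ℝ), (1 : ℝ)) t :=
    (hasDerivAt_const t r).prodMk (hasDerivAt_id t)
  exact hg.hasFDerivAt.comp_hasDerivAt t h1

/-- Two functions agreeing on `[t, d]` with `t < d` have the same derivative at `t`
(and hence anywhere in `[t, d)` by shifting). -/
private lemma deriv_eq_of_eq_on_right {g h : ℝ → ℝ} {t d va vb : ℝ}
    (hg : HasDerivAt g va t) (hh : HasDerivAt h vb t) (htd : t < d)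
    (he : ∀ s ∈ Icc t d, g s = h s) : va = vb := by
  have hU : UniqueDiffWithinAt ℝ (Icc t d) t :=
    (uniqueDiffOn_Icc htd) t (left_mem_Icc.2 htd.le)
  have hg' : HasDerivWithinAt h va (Icc t d) t :=
    (hg.hasDerivWithinAt).congr (fun s hs => (he s hs).symm) (he t (left_mem_Icc.2 htd.le)).symm
  have hh' : HasDerivWithinAt h vb (Icc t d) t := hh.hasDerivWithinAt
  have := hU.eq hg'.hasFDerivWithinAt hh'.hasFDerivWithinAt
  have := congrArg (fun (L : ℝ →L[ℝ] ℝ) => L 1) this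
  simpa using this

/-- Mixed second partial derivatives commute for `C²` functions. -/
private lemma d12_swap {g : ℝ × ℝ → ℝ} (hg : ContDiff ℝ 2 g) (z : ℝ × ℝ) :
    d1 (d2 g) z = d2 (d1 g) z := by
  have hdiff : DifferentiableAt ℝ (fderiv ℝ g) z := by
    have : ContDiff ℝ 1 (fun w => fderiv ℝ g w) := hg.fderiv_right (by norm_num)
    exact (this.differentiable (by norm_num)).differentiableAt
  have hsymm : IsSymmSndFDerivAt ℝ g z :=
    (hg.contDiffAt).isSymmSndFDerivAt (by norm_num)
  have key : ∀ v w : ℝ × ℝ, fderiv ℝ (fun y => fderiv ℝ g y v) z w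
      = fderiv ℝ (fderiv ℝ g) z w v := by
    intro v w
    rw [fderiv_clm_apply hdiff (differentiableAt_const v)]
    simp
  have e1 : d1 g = fun y => fderiv ℝ g y ((1 : ℝ), (0 : ℝ)) := rfl
  have e2 : d2 g = fun y => fderiv ℝ g y ((0 : ℝ), (1 : ℝ)) := rfl
  rw [d1, d2, e1, e2, key, key, hsymm.eq]

/-- `d1` of a `C²` function is `C¹`, etc. -/
private lemma contDiff_d1 {g : ℝ × ℝ → ℝ} {n m : ℕ} (hg : ContDiff ℝ n g) (hnm : m + 1 ≤ n) :
    ContDiff ℝ m (d1 g) := by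
  have : ContDiff ℝ m (fun w => fderiv ℝ g w) := hg.fderiv_right (by exact_mod_cast hnm)
  exact this.clm_apply contDiff_const

private lemma contDiff_d2 {g : ℝ × ℝ → ℝ} {n m : ℕ} (hg : ContDiff ℝ n g) (hnm : m + 1 ≤ n) :
    ContDiff ℝ m (d2 g) := by
  have : ContDiff ℝ m (fun w => fderiv ℝ g w) := hg.fderiv_right (by exact_mod_cast hnm)
  exact this.clm_apply contDiff_const

/-- The linear map `(r, t) ↦ (r • e1, t)`. -/
private def Lmap : (ℝ × ℝ) →L[ℝ] E3 × ℝ :=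
  ((ContinuousLinearMap.fst ℝ ℝ ℝ).smulRight e1).prod (ContinuousLinearMap.snd ℝ ℝ ℝ)

private lemma Lmap_apply (z : ℝ × ℝ) : Lmap z = (z.1 • e1, z.2) := rfl

private lemma prof_eq_comp (u : E3 × ℝ → ℝ) : prof u = u ∘ Lmap := rfl

private lemma contDiff_prof {u : E3 × ℝ → ℝ} {n : ℕ} (hu : ContDiff ℝ n u) :
    ContDiff ℝ n (prof u) := hu.comp Lmap.contDiff

private lemma contDiff_pt {u : E3 × ℝ → ℝ} {n m : ℕ} (hu : ContDiff ℝ n u) (hnm : m + 1 ≤ n) :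
    ContDiff ℝ m (pt u) := by
  have : ContDiff ℝ m (fun w => fderiv ℝ u w) := hu.fderiv_right (by exact_mod_cast hnm)
  exact this.clm_apply contDiff_const

private lemma contDiff_px {u : E3 × ℝ → ℝ} {n m : ℕ} (i : Fin 3) (hu : ContDiff ℝ n u)
    (hnm : m + 1 ≤ n) : ContDiff ℝ m (px i u) := by
  have : ContDiff ℝ m (fun w => fderiv ℝ u w) := hu.fderiv_right (by exact_mod_cast hnm)
  exact this.clm_apply contDiff_const

private lemma fderiv_comp_L {u : E3 × ℝ → ℝ} (hu : Differentiable ℝ u) (z v : ℝ × ℝ) :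
    fderiv ℝ (u ∘ Lmap) z v = fderiv ℝ u (Lmap z) (Lmap v) := by
  rw [fderiv_comp z (hu _) Lmap.differentiableAt]
  simp [Lmap.fderiv]

private lemma d2_prof_eq {u : E3 × ℝ → ℝ} (hu : ContDiff ℝ 3 u) (z : ℝ × ℝ) :
    d2 (prof u) z = pt u (z.1 • e1, z.2) := by
  have h := fderiv_comp_L (hu.differentiable (by norm_num)) z ((0 : ℝ), (1 : ℝ))
  have hL : Lmap ((0 : ℝ), (1 : ℝ)) = ((0 : E3), (1 : ℝ)) := by
    rw [Lmap_apply]; simp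
  rw [d2, prof_eq_comp, h, hL, ← Lmap_apply]
  rfl

private lemma d1_prof_eq {u : E3 × ℝ → ℝ} (hu : ContDiff ℝ 3 u) (z : ℝ × ℝ) :
    d1 (prof u) z = px 0 u (z.1 • e1, z.2) := by
  have h := fderiv_comp_L (hu.differentiable (by norm_num)) z ((1 : ℝ), (0 : ℝ))
  have hL : Lmap ((1 : ℝ), (0 : ℝ)) = ((EuclideanSpace.single 0 1 : E3), (0 : ℝ)) := by
    rw [Lmap_apply]; simp [e1]
  rw [d1, prof_eq_comp, h, hL, ← Lmap_apply]
  rfl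

private lemma d2_d2_prof_eq {u : E3 × ℝ → ℝ} (hu : ContDiff ℝ 3 u) (z : ℝ × ℝ) :
    d2 (d2 (prof u)) z = pt (pt u) (z.1 • e1, z.2) := by
  have hpt : ContDiff ℝ 2 (pt u) := contDiff_pt hu (by norm_num)
  have he : d2 (prof u) = (pt u) ∘ Lmap := by
    funext w; rw [d2_prof_eq hu w]; rfl
  have h := fderiv_comp_L (hpt.differentiable (by norm_num)) z ((0 : ℝ), (1 : ℝ))
  have hL : Lmap ((0 : ℝ), (1 : ℝ)) = ((0 : E3), (1 : ℝ)) := by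
    rw [Lmap_apply]; simp
  rw [d2, he, h, hL, ← Lmap_apply]
  rfl

private lemma norm_smul_e1 (r : ℝ) : ‖r • e1‖ = |r| := by
  rw [norm_smul, e1, EuclideanSpace.norm_single]
  simp

private lemma norm_combo (r c : ℝ) (i : Fin 3) (hi : i ≠ 0) :
    ‖r • e1 + c • (EuclideanSpace.single i (1 : ℝ) : E3)‖ = Real.sqrt (r ^ 2 + c ^ 2) := by
  rw [EuclideanSpace.norm_eq]
  congr 1
  fin_cases i
  · exact absurd rfl hi
  · simp [Fin.sum_univ_three, e1, EuclideanSpace.single_apply, PiLp.add_apply, PiLp.smul_apply,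
      sq_abs]
  · simp [Fin.sum_univ_three, e1, EuclideanSpace.single_apply, PiLp.add_apply, PiLp.smul_apply,
      sq_abs]

private lemma hasDerivAt_space_line {u : E3 × ℝ → ℝ} (hu : Differentiable ℝ u)
    (x v : E3) (t s : ℝ) :
    HasDerivAt (fun s : ℝ => u (x + s • v, t)) (fderiv ℝ u (x + s • v, t) (v, 0)) s := by
  have h1 : HasDerivAt (fun s : ℝ => (x + s • v, t)) ((v, 0) : E3 × ℝ) s := by
    refine HasDerivAt.prodMk ?_ (hasDerivAt_const s t)
    simpa using ((hasDerivAt_id s).smul_const v).const_add x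
  exact (hu _).hasFDerivAt.comp_hasDerivAt s h1

private lemma px0px0_eq {u : E3 × ℝ → ℝ} (hu : ContDiff ℝ 3 u) (r t : ℝ) :
    px 0 (px 0 u) (r • e1, t) = d1 (d1 (prof u)) (r, t) := by
  have hpx : ContDiff ℝ 2 (px 0 u) := contDiff_px 0 hu (by norm_num)
  have hF : ContDiff ℝ 3 (prof u) := contDiff_prof hu
  have hd1F : ContDiff ℝ 2 (d1 (prof u)) := contDiff_d1 hF (by norm_num)
  -- LHS as derivative of s ↦ px 0 u (r•e1 + s•e1, t) at 0
  have hL : HasDerivAt (fun s : ℝ => px 0 u (r • e1 + s • e1, t))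
      (px 0 (px 0 u) (r • e1, t)) 0 := by
    have := hasDerivAt_space_line (hpx.differentiable (by norm_num)) (r • e1) e1 t 0
    simpa [px, e1] using this
  -- RHS as derivative of the same function
  have hfun : (fun s : ℝ => px 0 u (r • e1 + s • e1, t))
      = fun s : ℝ => d1 (prof u) (r + s, t) := by
    funext s
    rw [← add_smul]
    exact (d1_prof_eq hu ((r + s), t)).symm
  have hR : HasDerivAt (fun s : ℝ => d1 (prof u) (r + s, t))
      (d1 (d1 (prof u)) (r, t)) 0 := by
    have h1 : HasDerivAt (fun ρ : ℝ => d1 (prof u) (ρ, t)) (d1 (d1 (prof u)) (r, t)) r :=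
      hasDerivAt_d1 ((hd1F.differentiable (by norm_num)) _)
    have h2 : HasDerivAt (fun s : ℝ => r + s) 1 0 := by
      simpa using (hasDerivAt_id (0:ℝ)).const_add r
    have h1' : HasDerivAt (fun ρ : ℝ => d1 (prof u) (ρ, t)) (d1 (d1 (prof u)) (r, t))
        ((fun s : ℝ => r + s) 0) := by simpa using h1
    have := h1'.comp 0 h2
    simpa [Function.comp_def] using this
  rw [hfun] at hL
  exact hL.unique hR

private lemma pxipxi_eq {u : E3 × ℝ → ℝ} (hu : ContDiff ℝ 3 u) (hrad : RadialIn u)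
    (i : Fin 3) (hi : i ≠ 0) {r t : ℝ} (hr : 0 < r) (ht : 0 ≤ t) :
    px i (px i u) (r • e1, t) = d1 (prof u) (r, t) / r := by
  set v : E3 := EuclideanSpace.single i (1 : ℝ) with hv
  have hpx : ContDiff ℝ 2 (px i u) := contDiff_px i hu (by norm_num)
  have hF : ContDiff ℝ 3 (prof u) := contDiff_prof hu
  have hdF : Differentiable ℝ (prof u) := hF.differentiable (by norm_num)
  have hd1F : ContDiff ℝ 2 (d1 (prof u)) := contDiff_d1 hF (by norm_num)
  -- the radial formula along the line
  have hrho : ∀ c : ℝ, 0 < Real.sqrt (r ^ 2 + c ^ 2) := by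
    intro c
    apply Real.sqrt_pos.2
    positivity
  have hradial : ∀ c : ℝ, u (r • e1 + c • v, t) = prof u (Real.sqrt (r ^ 2 + c ^ 2), t) := by
    intro c
    apply hrad _ _ _ ht
    rw [norm_combo r c i hi, norm_smul_e1, abs_of_nonneg (Real.sqrt_nonneg _)]
  -- derivative of c ↦ sqrt (r^2 + c^2)
  have hsq : ∀ c : ℝ, HasDerivAt (fun c : ℝ => Real.sqrt (r ^ 2 + c ^ 2))
      (c / Real.sqrt (r ^ 2 + c ^ 2)) c := by
    intro c
    have h1 : HasDerivAt (fun c : ℝ => r ^ 2 + c ^ 2) (2 * c) c := by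
      simpa using (hasDerivAt_pow 2 c).const_add (r ^ 2)
    have h2 : HasDerivAt Real.sqrt (1 / (2 * Real.sqrt (r ^ 2 + c ^ 2))) (r ^ 2 + c ^ 2) :=
      Real.hasDerivAt_sqrt (by positivity)
    have h3 := h2.comp c h1
    have hs := (hrho c).ne'
    have h4 : 1 / (2 * Real.sqrt (r ^ 2 + c ^ 2)) * (2 * c) = c / Real.sqrt (r ^ 2 + c ^ 2) := by
      field_simp
    rw [h4] at h3
    simpa [Function.comp_def] using h3
  -- first derivative formula on the line
  have hfirst : ∀ c : ℝ, px i u (r • e1 + c • v, t)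
      = d1 (prof u) (Real.sqrt (r ^ 2 + c ^ 2), t) * (c / Real.sqrt (r ^ 2 + c ^ 2)) := by
    intro c
    have hA : HasDerivAt (fun c : ℝ => u (r • e1 + c • v, t)) (px i u (r • e1 + c • v, t)) c := by
      have := hasDerivAt_space_line (hu.differentiable (by norm_num)) (r • e1) v t c
      simpa [px, hv] using this
    have hB : HasDerivAt (fun c : ℝ => u (r • e1 + c • v, t))
        (d1 (prof u) (Real.sqrt (r ^ 2 + c ^ 2), t) * (c / Real.sqrt (r ^ 2 + c ^ 2))) c := by
      have h1 : HasDerivAt (fun ρ : ℝ => prof u (ρ, t))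
          (d1 (prof u) (Real.sqrt (r ^ 2 + c ^ 2), t)) (Real.sqrt (r ^ 2 + c ^ 2)) :=
        hasDerivAt_d1 (hdF _)
      have h5 := h1.comp c (hsq c)
      exact h5.congr_of_eventuallyEq (Filter.Eventually.of_forall fun c => hradial c)
    exact hA.unique hB
  -- second derivative at c = 0
  have hL : HasDerivAt (fun s : ℝ => px i u (r • e1 + s • v, t))
      (px i (px i u) (r • e1, t)) 0 := by
    have := hasDerivAt_space_line (hpx.differentiable (by norm_num)) (r • e1) v t 0
    simpa [px, hv] using this
  have hR : HasDerivAt (fun s : ℝ => px i u (r • e1 + s • v, t))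
      (d1 (prof u) (r, t) / r) 0 := by
    have hfun3 : (fun s : ℝ => px i u (r • e1 + s • v, t))
        = fun s : ℝ => d1 (prof u) (Real.sqrt (r ^ 2 + s ^ 2), t)
            * (s / Real.sqrt (r ^ 2 + s ^ 2)) := by
      funext s; exact hfirst s
    rw [hfun3]
    have hsqrt0 : Real.sqrt (r ^ 2 + 0 ^ 2) = r := by
      simp [Real.sqrt_sq hr.le]
    -- factor 1 : s ↦ d1F(√(r²+s²), t), derivative 0 at 0
    have hf1 : HasDerivAt (fun s : ℝ => d1 (prof u) (Real.sqrt (r ^ 2 + s ^ 2), t))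
        (0 : ℝ) 0 := by
      have h1 : HasDerivAt (fun ρ : ℝ => d1 (prof u) (ρ, t))
          (d1 (d1 (prof u)) (r, t)) r :=
        hasDerivAt_d1 ((hd1F.differentiable (by norm_num)) _)
      have h2 := hsq 0
      rw [hsqrt0] at h2
      have h1' : HasDerivAt (fun ρ : ℝ => d1 (prof u) (ρ, t))
          (d1 (d1 (prof u)) (r, t)) ((fun s : ℝ => Real.sqrt (r ^ 2 + s ^ 2)) 0) := by
        simp only [hsqrt0]; exact h1
      have := h1'.comp 0 h2
      simpa [Function.comp_def] using this
    -- factor 2 : s ↦ s/√(r²+s²), derivative 1/r at 0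
    have hf2 : HasDerivAt (fun s : ℝ => s / Real.sqrt (r ^ 2 + s ^ 2)) (1 / r) 0 := by
      have h2 := hsq 0
      have hinv : HasDerivAt (fun s : ℝ => (Real.sqrt (r ^ 2 + s ^ 2))⁻¹)
          (0 : ℝ) 0 := by
        have := (hsq 0).inv (by rw [hsqrt0]; exact hr.ne')
        simpa [Pi.inv_def] using this
      have hid : HasDerivAt (fun s : ℝ => s) 1 0 := hasDerivAt_id 0
      have := hid.mul hinv
      simp only [div_eq_mul_inv]
      refine this.congr_deriv ?_
      rw [hsqrt0]
      simp [one_div]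
    have := hf1.mul hf2
    refine this.congr_deriv ?_
    rw [hsqrt0]
    ring
  exact hL.unique hR

private lemma lap_eq {u : E3 × ℝ → ℝ} (hu : ContDiff ℝ 3 u) (hrad : RadialIn u)
    {r t : ℝ} (hr : 0 < r) (ht : 0 ≤ t) :
    lap u (r • e1, t) = d1 (d1 (prof u)) (r, t) + 2 / r * d1 (prof u) (r, t) := by
  rw [lap, Fin.sum_univ_three]
  rw [px0px0_eq hu r t]
  rw [pxipxi_eq hu hrad 1 (by decide) hr ht, pxipxi_eq hu hrad 2 (by decide) hr ht]
  field_simp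
  ring

/-- Derivative of the damping nonlinearity `y ↦ |y|^(p-1) * y`. -/
private lemma hasDerivAt_absPow {p : ℝ} (hp : 3 ≤ p) (y : ℝ) :
    HasDerivAt (fun y : ℝ => |y| ^ (p - 1) * y) (p * |y| ^ (p - 1)) y := by
  rcases lt_trichotomy y 0 with hy | hy | hy
  · have h1 : HasDerivAt (fun x : ℝ => (-x) ^ (p - 1) * x)
        ((p - 1) * (-y) ^ (p - 1 - 1) * (-1) * y + (-y) ^ (p - 1)) y := by
      have hneg : HasDerivAt (fun x : ℝ => -x) (-1) y := (hasDerivAt_id y).neg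
      have hpow : HasDerivAt (fun x : ℝ => x ^ (p - 1))
          ((p - 1) * (-y) ^ (p - 1 - 1)) (-y) :=
        Real.hasDerivAt_rpow_const (Or.inl (by linarith))
      have := (hpow.comp y hneg).mul (hasDerivAt_id y)
      simpa [Function.comp_def, Pi.mul_def, mul_comm] using this
    have h2 : (p - 1) * (-y) ^ (p - 1 - 1) * (-1) * y + (-y) ^ (p - 1)
        = p * |y| ^ (p - 1) := by
      have hy' : (0:ℝ) < -y := by linarith
      have : (-y) ^ (p - 1 - 1) * (-y) = (-y) ^ (p - 1) := by
        rw [← Real.rpow_add_one hy'.ne']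
        ring_nf
      have habs : |y| = -y := abs_of_neg hy
      rw [habs]
      nlinarith [this]
    rw [← h2]
    apply h1.congr_of_eventuallyEq
    filter_upwards [eventually_lt_nhds hy] with x hx
    rw [abs_of_neg hx]
  · subst hy
    have hp1 : (0:ℝ) < p - 1 := by linarith
    rw [show p * |(0:ℝ)| ^ (p - 1) = 0 by simp [Real.zero_rpow hp1.ne']]
    rw [hasDerivAt_iff_tendsto_slope]
    have hev : ∀ x : ℝ, x ≠ 0 → slope (fun y : ℝ => |y| ^ (p - 1) * y) 0 x = |x| ^ (p - 1) := by
      intro x hx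
      rw [slope_def_field]
      field_simp
      ring
    have : Filter.Tendsto (fun x : ℝ => |x| ^ (p - 1)) (nhdsWithin 0 {(0:ℝ)}ᶜ) (nhds 0) := by
      have hc : ContinuousAt (fun x : ℝ => |x| ^ (p - 1)) 0 := by
        have := (Real.continuousAt_rpow_const |(0:ℝ)| (p - 1) (Or.inr (by linarith)))
        exact this.comp continuous_abs.continuousAt
      have h0 : |(0:ℝ)| ^ (p - 1) = 0 := by simp [Real.zero_rpow hp1.ne']
      have := hc.continuousWithinAt (s := {(0:ℝ)}ᶜ)
      rw [ContinuousWithinAt, h0] at this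
      exact this
    refine this.congr' ?_
    filter_upwards [self_mem_nhdsWithin] with x hx
    exact (hev x hx).symm
  · have h1 : HasDerivAt (fun x : ℝ => x ^ (p - 1) * x)
        ((p - 1) * y ^ (p - 1 - 1) * y + y ^ (p - 1)) y := by
      have hpow : HasDerivAt (fun x : ℝ => x ^ (p - 1))
          ((p - 1) * y ^ (p - 1 - 1)) y :=
        Real.hasDerivAt_rpow_const (Or.inl hy.ne')
      have := hpow.mul (hasDerivAt_id y)
      simpa [Pi.mul_def, mul_comm] using this
    have h2 : (p - 1) * y ^ (p - 1 - 1) * y + y ^ (p - 1) = p * |y| ^ (p - 1) := by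
      have : y ^ (p - 1 - 1) * y = y ^ (p - 1) := by
        rw [← Real.rpow_add_one hy.ne']
        ring_nf
      have habs : |y| = y := abs_of_pos hy
      rw [habs]
      nlinarith [this]
    rw [← h2]
    apply h1.congr_of_eventuallyEq
    filter_upwards [eventually_gt_nhds hy] with x hx
    rw [abs_of_pos hx]

/-- Product rule `fderiv (z.1 * g z)` evaluated in a direction. -/
private lemma fderiv_mul_fst {g : ℝ × ℝ → ℝ} {z : ℝ × ℝ} (hg : DifferentiableAt ℝ g z)
    (v : ℝ × ℝ) :
    fderiv ℝ (fun z : ℝ × ℝ => z.1 * g z) z v = v.1 * g z + z.1 * fderiv ℝ g z v := by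
  have h1 : HasFDerivAt (fun z : ℝ × ℝ => z.1) (ContinuousLinearMap.fst ℝ ℝ ℝ) z :=
    hasFDerivAt_fst
  have h : HasFDerivAt (fun z : ℝ × ℝ => z.1 * g z) _ z := h1.mul hg.hasFDerivAt
  rw [h.fderiv]
  simp only [ContinuousLinearMap.add_apply, ContinuousLinearMap.smul_apply,
    ContinuousLinearMap.coe_fst', smul_eq_mul]
  ring

private lemma hasFDerivAt_mul_fst {g : ℝ × ℝ → ℝ} {z : ℝ × ℝ} (hg : DifferentiableAt ℝ g z) :
    DifferentiableAt ℝ (fun z : ℝ × ℝ => z.1 * g z) z := by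
  exact (differentiableAt_fst).mul hg

/-- The radial profile satisfies the radial PDE for `r > 0`, `t ≥ 0`. -/
private lemma radial_pde {u : E3 × ℝ → ℝ} {p : ℝ} (hu : ContDiff ℝ 3 u)
    (heq : ∀ (x : E3) (t : ℝ), 0 ≤ t →
      pt (pt u) (x, t) - lap u (x, t) + |pt u (x, t)| ^ (p - 1) * pt u (x, t) = 0)
    (hrad : RadialIn u) {r t : ℝ} (hr : 0 < r) (ht : 0 ≤ t) :
    d2 (d2 (prof u)) (r, t) = d1 (d1 (prof u)) (r, t) + 2 / r * d1 (prof u) (r, t)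
      - |d2 (prof u) (r, t)| ^ (p - 1) * d2 (prof u) (r, t) := by
  have h := heq (r • e1) t ht
  have e1' := d2_d2_prof_eq hu (r, t)
  have e2' := d2_prof_eq hu (r, t)
  have e3' := lap_eq hu hrad hr ht
  simp only at e1' e2'
  rw [← e1', ← e2', e3'] at h
  linarith

/-- The damped 1d wave equation for `w(r,t) = r ∂ₜ f(r,t)`, valid for `r > 0`, `t > 0`. -/
private lemma wave_eq_W {u : E3 × ℝ → ℝ} {p : ℝ} (hp : 3 ≤ p) (hu : ContDiff ℝ 3 u)
    (heq : ∀ (x : E3) (t : ℝ), 0 ≤ t →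
      pt (pt u) (x, t) - lap u (x, t) + |pt u (x, t)| ^ (p - 1) * pt u (x, t) = 0)
    (hrad : RadialIn u) {r t : ℝ} (hr : 0 < r) (ht : 0 < t) :
    d2 (d2 (fun z : ℝ × ℝ => z.1 * d2 (prof u) z)) (r, t)
      - d1 (d1 (fun z : ℝ × ℝ => z.1 * d2 (prof u) z)) (r, t)
      = -(p * |d2 (prof u) (r, t)| ^ (p - 1)) * (r * d2 (d2 (prof u)) (r, t)) := by
  have hF3 : ContDiff ℝ 3 (prof u) := contDiff_prof hu
  have hF2 : ContDiff ℝ 2 (prof u) := hF3.of_le (by norm_num)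
  have hd2F : ContDiff ℝ 2 (d2 (prof u)) := contDiff_d2 hF3 (by norm_num)
  have hd1F : ContDiff ℝ 2 (d1 (prof u)) := contDiff_d1 hF3 (by norm_num)
  have hd22 : ContDiff ℝ 1 (d2 (d2 (prof u))) := contDiff_d2 hd2F (by norm_num)
  have hd12 : ContDiff ℝ 1 (d1 (d2 (prof u))) := contDiff_d1 hd2F (by norm_num)
  have hd11 : ContDiff ℝ 1 (d1 (d1 (prof u))) := contDiff_d1 hd1F (by norm_num)
  set F := prof u with hFdef
  set z₀ : ℝ × ℝ := (r, t) with hz₀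
  -- eventually, the radial PDE holds
  have hU : (d2 (d2 F)) =ᶠ[nhds z₀]
      (fun z => d1 (d1 F) z + 2 / z.1 * d1 F z - |d2 F z| ^ (p - 1) * d2 F z) := by
    have hop : IsOpen (Ioi (0:ℝ) ×ˢ Ioi (0:ℝ)) := isOpen_Ioi.prod isOpen_Ioi
    filter_upwards [hop.mem_nhds (by exact ⟨hr, ht⟩)] with z hz
    exact radial_pde hu heq hrad hz.1 (le_of_lt hz.2)
  -- derivative of the right-hand side
  have hA : HasFDerivAt (d1 (d1 F)) (fderiv ℝ (d1 (d1 F)) z₀) z₀ :=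
    ((hd11.differentiable (by norm_num)) z₀).hasFDerivAt
  have hBc : HasFDerivAt (fun z : ℝ × ℝ => 2 / z.1)
      ((2:ℝ) • ((-(z₀.1 ^ 2)⁻¹ : ℝ) • (ContinuousLinearMap.fst ℝ ℝ ℝ))) z₀ := by
    have hi : HasFDerivAt (fun z : ℝ × ℝ => (z.1)⁻¹)
        ((-(z₀.1 ^ 2)⁻¹ : ℝ) • (ContinuousLinearMap.fst ℝ ℝ ℝ)) z₀ :=
      (hasDerivAt_inv hr.ne').comp_hasFDerivAt z₀ (hasFDerivAt_fst (p := z₀))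
    simpa [div_eq_mul_inv] using hi.const_mul (2:ℝ)
  have hB := hBc.mul ((hd1F.differentiable (by norm_num)) z₀).hasFDerivAt
  have hC : HasFDerivAt (fun z : ℝ × ℝ => |d2 F z| ^ (p - 1) * d2 F z)
      ((p * |d2 F z₀| ^ (p - 1)) • (fderiv ℝ (d2 F) z₀)) z₀ :=
    (hasDerivAt_absPow hp (d2 F z₀)).comp_hasFDerivAt z₀
      ((hd2F.differentiable (by norm_num)) z₀).hasFDerivAt
  have hRHS := (hA.add hB).sub hC
  have hL : HasFDerivAt (d2 (d2 F)) _ z₀ := hRHS.congr_of_eventuallyEq hU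
  have key3 : d2 (d2 (d2 F)) z₀
      = d2 (d1 (d1 F)) z₀ + 2 / r * d2 (d1 F) z₀
        - p * |d2 F z₀| ^ (p - 1) * d2 (d2 F) z₀ := by
    have := hL.fderiv
    have happ := congrArg (fun (L : ℝ × ℝ →L[ℝ] ℝ) => L ((0:ℝ), (1:ℝ))) this
    simp only [ContinuousLinearMap.add_apply, ContinuousLinearMap.sub_apply,
      ContinuousLinearMap.smul_apply, ContinuousLinearMap.coe_fst', smul_eq_mul] at happ
    rw [show d2 (d2 (d2 F)) z₀ = fderiv ℝ (d2 (d2 F)) z₀ ((0:ℝ),(1:ℝ)) from rfl, happ]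
    simp only [d1, d2]
    ring
  -- symmetry of second derivatives
  have sw1 : d2 (d1 F) = d1 (d2 F) := by
    funext w; exact (d12_swap hF2 w).symm
  have sw2 : d2 (d1 (d1 F)) z₀ = d1 (d1 (d2 F)) z₀ := by
    rw [← d12_swap hd1F z₀, sw1]
  rw [sw2, sw1] at key3
  -- second derivatives of W
  have hdiff_d2F : ∀ z, DifferentiableAt ℝ (d2 F) z :=
    fun z => (hd2F.differentiable (by norm_num)) z
  have hdiff_d22 : ∀ z, DifferentiableAt ℝ (d2 (d2 F)) z :=
    fun z => (hd22.differentiable (by norm_num)) z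
  have hdiff_d12 : ∀ z, DifferentiableAt ℝ (d1 (d2 F)) z :=
    fun z => (hd12.differentiable (by norm_num)) z
  have hW2fun : d2 (fun z : ℝ × ℝ => z.1 * d2 F z) = fun z => z.1 * d2 (d2 F) z := by
    funext z
    rw [show d2 (fun z : ℝ × ℝ => z.1 * d2 F z) z
        = fderiv ℝ (fun z : ℝ × ℝ => z.1 * d2 F z) z ((0:ℝ),(1:ℝ)) from rfl,
      fderiv_mul_fst (hdiff_d2F z)]
    simp [d2]
  have hW1fun : d1 (fun z : ℝ × ℝ => z.1 * d2 F z) = fun z => d2 F z + z.1 * d1 (d2 F) z := by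
    funext z
    rw [show d1 (fun z : ℝ × ℝ => z.1 * d2 F z) z
        = fderiv ℝ (fun z : ℝ × ℝ => z.1 * d2 F z) z ((1:ℝ),(0:ℝ)) from rfl,
      fderiv_mul_fst (hdiff_d2F z)]
    simp [d1]
  have hW22 : d2 (d2 (fun z : ℝ × ℝ => z.1 * d2 F z)) z₀ = r * d2 (d2 (d2 F)) z₀ := by
    rw [hW2fun]
    rw [show d2 (fun z : ℝ × ℝ => z.1 * d2 (d2 F) z) z₀
        = fderiv ℝ (fun z : ℝ × ℝ => z.1 * d2 (d2 F) z) z₀ ((0:ℝ),(1:ℝ)) from rfl,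
      fderiv_mul_fst (hdiff_d22 z₀)]
    simp [d2]
    exact Or.inl rfl
  have hW11 : d1 (d1 (fun z : ℝ × ℝ => z.1 * d2 F z)) z₀
      = 2 * d1 (d2 F) z₀ + r * d1 (d1 (d2 F)) z₀ := by
    rw [hW1fun]
    rw [show d1 (fun z : ℝ × ℝ => d2 F z + z.1 * d1 (d2 F) z) z₀
        = fderiv ℝ (fun z : ℝ × ℝ => d2 F z + z.1 * d1 (d2 F) z) z₀ ((1:ℝ),(0:ℝ)) from rfl]
    rw [fderiv_fun_add (hdiff_d2F z₀) (hasFDerivAt_mul_fst (hdiff_d12 z₀))]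
    simp only [ContinuousLinearMap.add_apply]
    rw [fderiv_mul_fst (hdiff_d12 z₀)]
    simp only [d1]
    ring
  rw [hW22, hW11, key3]
  field_simp
  ring

/-- `w(r,t) = r ∂ₜ f(r,t)`. -/
private def Wfun (u : E3 × ℝ → ℝ) : ℝ × ℝ → ℝ := fun z => z.1 * d2 (prof u) z

private lemma Xplus_eq (u : E3 × ℝ → ℝ) (z : ℝ × ℝ) :
    Xplus u z = d2 (Wfun u) z + d1 (Wfun u) z := rfl

private lemma Xminus_eq (u : E3 × ℝ → ℝ) (z : ℝ × ℝ) :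
    Xminus u z = d2 (Wfun u) z - d1 (Wfun u) z := rfl

private lemma contDiff_Wfun {u : E3 × ℝ → ℝ} (hu : ContDiff ℝ 3 u) :
    ContDiff ℝ 2 (Wfun u) :=
  contDiff_fst.mul (contDiff_d2 (contDiff_prof hu) (by norm_num))

private lemma contDiff_Xplus {u : E3 × ℝ → ℝ} (hu : ContDiff ℝ 3 u) :
    ContDiff ℝ 1 (Xplus u) := by
  have h2 : ContDiff ℝ 1 (d2 (Wfun u)) := contDiff_d2 (contDiff_Wfun hu) (by norm_num)
  have h1 : ContDiff ℝ 1 (d1 (Wfun u)) := contDiff_d1 (contDiff_Wfun hu) (by norm_num)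
  exact h2.add h1

private lemma contDiff_Xminus {u : E3 × ℝ → ℝ} (hu : ContDiff ℝ 3 u) :
    ContDiff ℝ 1 (Xminus u) := by
  have h2 : ContDiff ℝ 1 (d2 (Wfun u)) := contDiff_d2 (contDiff_Wfun hu) (by norm_num)
  have h1 : ContDiff ℝ 1 (d1 (Wfun u)) := contDiff_d1 (contDiff_Wfun hu) (by norm_num)
  exact h2.sub h1

private lemma d2W_eq {u : E3 × ℝ → ℝ} (hu : ContDiff ℝ 3 u) (z : ℝ × ℝ) :
    d2 (Wfun u) z = z.1 * d2 (d2 (prof u)) z := by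
  have hdiff : DifferentiableAt ℝ (d2 (prof u)) z :=
    ((contDiff_d2 (contDiff_prof hu) (by norm_num) : ContDiff ℝ 2 _).differentiable
      (by norm_num)) z
  rw [show d2 (Wfun u) z = fderiv ℝ (fun z : ℝ × ℝ => z.1 * d2 (prof u) z) z ((0:ℝ),(1:ℝ))
    from rfl, fderiv_mul_fst hdiff]
  simp [d2]

private lemma d1W_eq {u : E3 × ℝ → ℝ} (hu : ContDiff ℝ 3 u) (z : ℝ × ℝ) :
    d1 (Wfun u) z = d2 (prof u) z + z.1 * d1 (d2 (prof u)) z := by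
  have hdiff : DifferentiableAt ℝ (d2 (prof u)) z :=
    ((contDiff_d2 (contDiff_prof hu) (by norm_num) : ContDiff ℝ 2 _).differentiable
      (by norm_num)) z
  rw [show d1 (Wfun u) z = fderiv ℝ (fun z : ℝ × ℝ => z.1 * d2 (prof u) z) z ((1:ℝ),(0:ℝ))
    from rfl, fderiv_mul_fst hdiff]
  simp [d1]

/-- Evenness of the profile in `r`, for `t ≥ 0`. -/
private lemma prof_even {u : E3 × ℝ → ℝ} (hrad : RadialIn u) {t : ℝ} (ht : 0 ≤ t) (ρ : ℝ) :
    prof u (-ρ, t) = prof u (ρ, t) := by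
  apply hrad _ _ _ ht
  rw [norm_smul_e1, norm_smul_e1, abs_neg]

/-- Evenness of `∂ₜ f` in `r`, for `t ≥ 0`. -/
private lemma d2F_even {u : E3 × ℝ → ℝ} (hu : ContDiff ℝ 3 u) (hrad : RadialIn u)
    {t : ℝ} (ht : 0 ≤ t) (ρ : ℝ) :
    d2 (prof u) (-ρ, t) = d2 (prof u) (ρ, t) := by
  have hdF : Differentiable ℝ (prof u) := (contDiff_prof hu).differentiable (by norm_num)
  have hA : HasDerivAt (fun τ : ℝ => prof u (-ρ, τ)) (d2 (prof u) (-ρ, t)) t :=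
    hasDerivAt_d2 (hdF _)
  have hB : HasDerivAt (fun τ : ℝ => prof u (ρ, τ)) (d2 (prof u) (ρ, t)) t :=
    hasDerivAt_d2 (hdF _)
  exact deriv_eq_of_eq_on_right hA hB (lt_add_one t)
    (fun s hs => prof_even hrad (le_trans ht hs.1) ρ)

/-- Oddness of `w` in `r`, for `t ≥ 0`. -/
private lemma W_odd {u : E3 × ℝ → ℝ} (hu : ContDiff ℝ 3 u) (hrad : RadialIn u)
    {t : ℝ} (ht : 0 ≤ t) (ρ : ℝ) :
    Wfun u (-ρ, t) = -Wfun u (ρ, t) := by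
  unfold Wfun
  simp only
  rw [d2F_even hu hrad ht ρ]
  ring

private lemma d2W_odd {u : E3 × ℝ → ℝ} (hu : ContDiff ℝ 3 u) (hrad : RadialIn u)
    {t : ℝ} (ht : 0 ≤ t) (ρ : ℝ) :
    d2 (Wfun u) (-ρ, t) = -(d2 (Wfun u) (ρ, t)) := by
  have hdW : Differentiable ℝ (Wfun u) := (contDiff_Wfun hu).differentiable (by norm_num)
  have hA : HasDerivAt (fun τ : ℝ => Wfun u (-ρ, τ)) (d2 (Wfun u) (-ρ, t)) t :=
    hasDerivAt_d2 (hdW _)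
  have hB : HasDerivAt (fun τ : ℝ => -Wfun u (ρ, τ)) (-(d2 (Wfun u) (ρ, t))) t :=
    (hasDerivAt_d2 (hdW _)).neg
  exact deriv_eq_of_eq_on_right hA hB (lt_add_one t)
    (fun s hs => W_odd hu hrad (le_trans ht hs.1) ρ)

private lemma d1W_even {u : E3 × ℝ → ℝ} (hu : ContDiff ℝ 3 u) (hrad : RadialIn u)
    {t : ℝ} (ht : 0 ≤ t) (ρ : ℝ) :
    d1 (Wfun u) (-ρ, t) = d1 (Wfun u) (ρ, t) := by
  have hdW : Differentiable ℝ (Wfun u) := (contDiff_Wfun hu).differentiable (by norm_num)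
  have hA : HasDerivAt (fun ρ' : ℝ => Wfun u (ρ', t)) (d1 (Wfun u) (-ρ, t)) (-ρ) :=
    hasDerivAt_d1 (hdW _)
  have hB : HasDerivAt (fun ρ' : ℝ => Wfun u (ρ', t)) (d1 (Wfun u) (ρ, t)) (-ρ) := by
    have hg : HasDerivAt (fun ρ' : ℝ => Wfun u (ρ', t)) (d1 (Wfun u) (ρ, t))
        ((fun ρ' : ℝ => -ρ') (-ρ)) := by
      simpa using (hasDerivAt_d1 (g := Wfun u) (r := ρ) (t := t) (hdW _))
    have hneg : HasDerivAt (fun ρ' : ℝ => -ρ') (-1 : ℝ) (-ρ) := by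
      simpa using hasDerivAt_neg (x := -ρ)
    have hcomp := hg.comp (-ρ) hneg
    have : HasDerivAt (fun ρ' : ℝ => -(Wfun u (-ρ', t))) (d1 (Wfun u) (ρ, t)) (-ρ) := by
      have := hcomp.neg
      simpa [Function.comp_def, Pi.neg_def] using this
    apply this.congr_of_eventuallyEq
    apply Filter.Eventually.of_forall
    intro ρ'
    simp only
    rw [W_odd hu hrad ht ρ']
    ring
  exact hA.unique hB

/-- Reflection identity `X₊(-ρ, t) = -X₋(ρ, t)` for `t ≥ 0`. -/
private lemma Xplus_reflect {u : E3 × ℝ → ℝ} (hu : ContDiff ℝ 3 u) (hrad : RadialIn u)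
    {t : ℝ} (ht : 0 ≤ t) (ρ : ℝ) :
    Xplus u (-ρ, t) = -Xminus u (ρ, t) := by
  rw [Xplus_eq, Xminus_eq, d2W_odd hu hrad ht ρ, d1W_even hu hrad ht ρ]
  ring

/-- Transport equation for `X₊` at `r > 0`, `t > 0`. -/
private lemma transport_pos {u : E3 × ℝ → ℝ} {p : ℝ} (hp : 3 ≤ p) (hu : ContDiff ℝ 3 u)
    (heq : ∀ (x : E3) (t : ℝ), 0 ≤ t →
      pt (pt u) (x, t) - lap u (x, t) + |pt u (x, t)| ^ (p - 1) * pt u (x, t) = 0)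
    (hrad : RadialIn u) {r t : ℝ} (hr : 0 < r) (ht : 0 < t) :
    d2 (Xplus u) (r, t) - d1 (Xplus u) (r, t)
      = -(p * |d2 (prof u) (r, t)| ^ (p - 1)) * d2 (Wfun u) (r, t) := by
  have hd2W1 : ContDiff ℝ 1 (d2 (Wfun u)) := contDiff_d2 (contDiff_Wfun hu) (by norm_num)
  have hd1W1 : ContDiff ℝ 1 (d1 (Wfun u)) := contDiff_d1 (contDiff_Wfun hu) (by norm_num)
  have e_add : ∀ v : ℝ × ℝ, fderiv ℝ (Xplus u) (r, t) v
      = fderiv ℝ (d2 (Wfun u)) (r, t) v + fderiv ℝ (d1 (Wfun u)) (r, t) v := by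
    intro v
    have hXd : Xplus u = fun z => d2 (Wfun u) z + d1 (Wfun u) z := rfl
    rw [hXd, fderiv_fun_add ((hd2W1.differentiable (by norm_num)) _) ((hd1W1.differentiable (by norm_num)) _)]
    simp
  have hswap := d12_swap (contDiff_Wfun hu) (r, t)
  have hwave := wave_eq_W hp hu heq hrad hr ht
  have hW2 := d2W_eq hu ((r : ℝ), t)
  have hL : d2 (Xplus u) (r, t) - d1 (Xplus u) (r, t)
      = d2 (d2 (Wfun u)) (r, t) - d1 (d1 (Wfun u)) (r, t) := by
    have e2 := e_add ((0:ℝ), (1:ℝ))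
    have e1 := e_add ((1:ℝ), (0:ℝ))
    rw [show d2 (Xplus u) (r, t) = fderiv ℝ (Xplus u) (r, t) ((0:ℝ),(1:ℝ)) from rfl,
      show d1 (Xplus u) (r, t) = fderiv ℝ (Xplus u) (r, t) ((1:ℝ),(0:ℝ)) from rfl, e2, e1]
    have : fderiv ℝ (d1 (Wfun u)) (r, t) ((0:ℝ),(1:ℝ)) = d2 (d1 (Wfun u)) (r, t) := rfl
    have h2 : fderiv ℝ (d2 (Wfun u)) (r, t) ((1:ℝ),(0:ℝ)) = d1 (d2 (Wfun u)) (r, t) := rfl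
    rw [this, h2]
    rw [show fderiv ℝ (d2 (Wfun u)) (r, t) ((0:ℝ),(1:ℝ)) = d2 (d2 (Wfun u)) (r, t) from rfl,
      show fderiv ℝ (d1 (Wfun u)) (r, t) ((1:ℝ),(0:ℝ)) = d1 (d1 (Wfun u)) (r, t) from rfl]
    rw [hswap]
    ring
  rw [hL]
  have hwave' : d2 (d2 (Wfun u)) (r, t) - d1 (d1 (Wfun u)) (r, t)
      = -(p * |d2 (prof u) (r, t)| ^ (p - 1)) * (r * d2 (d2 (prof u)) (r, t)) := hwave
  rw [hwave', hW2]

/-- Transport equation for `X₋` at `r > 0`, `t > 0`. -/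
private lemma transport_minus_pos {u : E3 × ℝ → ℝ} {p : ℝ} (hp : 3 ≤ p) (hu : ContDiff ℝ 3 u)
    (heq : ∀ (x : E3) (t : ℝ), 0 ≤ t →
      pt (pt u) (x, t) - lap u (x, t) + |pt u (x, t)| ^ (p - 1) * pt u (x, t) = 0)
    (hrad : RadialIn u) {r t : ℝ} (hr : 0 < r) (ht : 0 < t) :
    d2 (Xminus u) (r, t) + d1 (Xminus u) (r, t)
      = -(p * |d2 (prof u) (r, t)| ^ (p - 1)) * d2 (Wfun u) (r, t) := by
  have hd2W1 : ContDiff ℝ 1 (d2 (Wfun u)) := contDiff_d2 (contDiff_Wfun hu) (by norm_num)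
  have hd1W1 : ContDiff ℝ 1 (d1 (Wfun u)) := contDiff_d1 (contDiff_Wfun hu) (by norm_num)
  have e_sub : ∀ v : ℝ × ℝ, fderiv ℝ (Xminus u) (r, t) v
      = fderiv ℝ (d2 (Wfun u)) (r, t) v - fderiv ℝ (d1 (Wfun u)) (r, t) v := by
    intro v
    have hXd : Xminus u = fun z => d2 (Wfun u) z - d1 (Wfun u) z := rfl
    rw [hXd, fderiv_fun_sub ((hd2W1.differentiable (by norm_num)) _) ((hd1W1.differentiable (by norm_num)) _)]
    simp
  have hswap := d12_swap (contDiff_Wfun hu) (r, t)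
  have hwave' : d2 (d2 (Wfun u)) (r, t) - d1 (d1 (Wfun u)) (r, t)
      = -(p * |d2 (prof u) (r, t)| ^ (p - 1)) * (r * d2 (d2 (prof u)) (r, t)) :=
    wave_eq_W hp hu heq hrad hr ht
  have hW2 := d2W_eq hu ((r : ℝ), t)
  have hL : d2 (Xminus u) (r, t) + d1 (Xminus u) (r, t)
      = d2 (d2 (Wfun u)) (r, t) - d1 (d1 (Wfun u)) (r, t) := by
    have e2 := e_sub ((0:ℝ), (1:ℝ))
    have e1 := e_sub ((1:ℝ), (0:ℝ))
    rw [show d2 (Xminus u) (r, t) = fderiv ℝ (Xminus u) (r, t) ((0:ℝ),(1:ℝ)) from rfl,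
      show d1 (Xminus u) (r, t) = fderiv ℝ (Xminus u) (r, t) ((1:ℝ),(0:ℝ)) from rfl, e2, e1]
    rw [show fderiv ℝ (d1 (Wfun u)) (r, t) ((0:ℝ),(1:ℝ)) = d2 (d1 (Wfun u)) (r, t) from rfl,
      show fderiv ℝ (d2 (Wfun u)) (r, t) ((1:ℝ),(0:ℝ)) = d1 (d2 (Wfun u)) (r, t) from rfl,
      show fderiv ℝ (d2 (Wfun u)) (r, t) ((0:ℝ),(1:ℝ)) = d2 (d2 (Wfun u)) (r, t) from rfl,
      show fderiv ℝ (d1 (Wfun u)) (r, t) ((1:ℝ),(0:ℝ)) = d1 (d1 (Wfun u)) (r, t) from rfl]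
    rw [hswap]
    ring
  rw [hL, hwave', hW2]

/-- The reflection map as a continuous linear map. -/
private def Nmap : (ℝ × ℝ) →L[ℝ] (ℝ × ℝ) :=
  (-(ContinuousLinearMap.fst ℝ ℝ ℝ)).prod (ContinuousLinearMap.snd ℝ ℝ ℝ)

private lemma Nmap_apply (z : ℝ × ℝ) : Nmap z = (-z.1, z.2) := rfl

/-- Transport equation for `X₊` at `r < 0`, `t > 0`. -/
private lemma transport_neg {u : E3 × ℝ → ℝ} {p : ℝ} (hp : 3 ≤ p) (hu : ContDiff ℝ 3 u)
    (heq : ∀ (x : E3) (t : ℝ), 0 ≤ t →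
      pt (pt u) (x, t) - lap u (x, t) + |pt u (x, t)| ^ (p - 1) * pt u (x, t) = 0)
    (hrad : RadialIn u) {r t : ℝ} (hr : r < 0) (ht : 0 < t) :
    d2 (Xplus u) (r, t) - d1 (Xplus u) (r, t)
      = -(p * |d2 (prof u) (r, t)| ^ (p - 1)) * d2 (Wfun u) (r, t) := by
  have hXm : ContDiff ℝ 1 (Xminus u) := contDiff_Xminus hu
  -- eventually, X₊ equals the reflected -X₋
  have hev : Xplus u =ᶠ[nhds ((r : ℝ), t)] (fun z => -Xminus u (Nmap z)) := by
    have hop : IsOpen {z : ℝ × ℝ | 0 < z.2} := isOpen_lt continuous_const continuous_snd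
    filter_upwards [hop.mem_nhds (by exact ht)] with z hz
    have := Xplus_reflect hu hrad (le_of_lt hz) (-z.1)
    rw [neg_neg] at this
    calc Xplus u z = Xplus u (z.1, z.2) := by rw [Prod.mk.eta]
    _ = -Xminus u (-z.1, z.2) := this
    _ = -Xminus u (Nmap z) := by rw [Nmap_apply]
  -- derivative of the reflected function
  have hR : HasFDerivAt (fun z => -Xminus u (Nmap z))
      (-((fderiv ℝ (Xminus u) (Nmap ((r:ℝ), t))).comp Nmap)) ((r:ℝ), t) := by
    have h1 : HasFDerivAt (Xminus u) (fderiv ℝ (Xminus u) (Nmap ((r:ℝ), t)))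
        (Nmap ((r:ℝ), t)) := ((hXm.differentiable (by norm_num)) _).hasFDerivAt
    exact (h1.comp _ Nmap.hasFDerivAt).neg
  have hL : HasFDerivAt (Xplus u)
      (-((fderiv ℝ (Xminus u) (Nmap ((r:ℝ), t))).comp Nmap)) ((r:ℝ), t) :=
    hR.congr_of_eventuallyEq hev
  have hfd := hL.fderiv
  have e2 : d2 (Xplus u) (r, t) = -(d2 (Xminus u) (-r, t)) := by
    have := congrArg (fun (L : ℝ × ℝ →L[ℝ] ℝ) => L ((0:ℝ), (1:ℝ))) hfd
    simp only [ContinuousLinearMap.neg_apply, ContinuousLinearMap.comp_apply] at this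
    rw [show d2 (Xplus u) (r, t) = fderiv ℝ (Xplus u) (r, t) ((0:ℝ),(1:ℝ)) from rfl, this]
    rw [show Nmap ((0:ℝ), (1:ℝ)) = ((0:ℝ), (1:ℝ)) by rw [Nmap_apply]; norm_num]
    rfl
  have e1 : d1 (Xplus u) (r, t) = d1 (Xminus u) (-r, t) := by
    have := congrArg (fun (L : ℝ × ℝ →L[ℝ] ℝ) => L ((1:ℝ), (0:ℝ))) hfd
    simp only [ContinuousLinearMap.neg_apply, ContinuousLinearMap.comp_apply] at this
    rw [show d1 (Xplus u) (r, t) = fderiv ℝ (Xplus u) (r, t) ((1:ℝ),(0:ℝ)) from rfl, this]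
    rw [show Nmap ((1:ℝ), (0:ℝ)) = ((-1:ℝ), (0:ℝ)) by rw [Nmap_apply]]
    have : ((-1 : ℝ), (0:ℝ)) = -((1:ℝ), (0:ℝ)) := by norm_num
    rw [this, map_neg]
    simp only [neg_neg]
    rfl
  have hmain := transport_minus_pos hp hu heq hrad (by linarith : (0:ℝ) < -r) ht
  rw [e2, e1]
  have heven := d2F_even hu hrad ht.le r
  have hodd := d2W_odd hu hrad ht.le r
  have : -(d2 (Xminus u) (-r, t)) - d1 (Xminus u) (-r, t)
      = -(d2 (Xminus u) (-r, t) + d1 (Xminus u) (-r, t)) := by ring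
  rw [this, hmain, heven, hodd]
  ring

private lemma continuous_d2X {u : E3 × ℝ → ℝ} {g : ℝ × ℝ → ℝ} (hg : ContDiff ℝ 1 g) :
    Continuous (d2 g) := by
  have h := hg.continuous_fderiv (by norm_num)
  exact h.clm_apply continuous_const

private lemma continuous_d1X {u : E3 × ℝ → ℝ} {g : ℝ × ℝ → ℝ} (hg : ContDiff ℝ 1 g) :
    Continuous (d1 g) := by
  have h := hg.continuous_fderiv (by norm_num)
  exact h.clm_apply continuous_const

/-- Transport equation for `X₊`, all `r`, `t > 0`. -/
private lemma transport_all {u : E3 × ℝ → ℝ} {p : ℝ} (hp : 3 ≤ p) (hu : ContDiff ℝ 3 u)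
    (heq : ∀ (x : E3) (t : ℝ), 0 ≤ t →
      pt (pt u) (x, t) - lap u (x, t) + |pt u (x, t)| ^ (p - 1) * pt u (x, t) = 0)
    (hrad : RadialIn u) {r t : ℝ} (ht : 0 < t) :
    d2 (Xplus u) (r, t) - d1 (Xplus u) (r, t)
      = -(p * |d2 (prof u) (r, t)| ^ (p - 1)) * d2 (Wfun u) (r, t) := by
  rcases lt_trichotomy r 0 with hr | hr | hr
  · exact transport_neg hp hu heq hrad hr ht
  · subst hr
    -- by continuity in ρ at fixed t
    set Φ : ℝ → ℝ := fun ρ => d2 (Xplus u) (ρ, t) - d1 (Xplus u) (ρ, t)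
      + (p * |d2 (prof u) (ρ, t)| ^ (p - 1)) * d2 (Wfun u) (ρ, t) with hΦdef
    have hline : Continuous (fun ρ : ℝ => ((ρ : ℝ), t)) :=
      continuous_id.prodMk continuous_const
    have hcont : Continuous Φ := by
      have c1 : Continuous (d2 (Xplus u)) := continuous_d2X (u := u) (contDiff_Xplus hu)
      have c2 : Continuous (d1 (Xplus u)) := continuous_d1X (u := u) (contDiff_Xplus hu)
      have c3 : Continuous (d2 (prof u)) :=
        (contDiff_d2 (contDiff_prof hu) (by norm_num) : ContDiff ℝ 2 _).continuous
      have c4 : Continuous (d2 (Wfun u)) := by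
        have : ContDiff ℝ 1 (d2 (Wfun u)) := contDiff_d2 (contDiff_Wfun hu) (by norm_num)
        exact this.continuous
      have c5 : Continuous (fun z : ℝ × ℝ => p * |d2 (prof u) z| ^ (p - 1)) := by
        have : Continuous (fun z : ℝ × ℝ => |d2 (prof u) z|) := continuous_abs.comp c3
        exact continuous_const.mul (this.rpow_const (fun x => Or.inr (by linarith)))
      exact (((c1.comp hline).sub (c2.comp hline)).add
        (((c5.comp hline)).mul (c4.comp hline)))
    have hzero : ∀ ρ : ℝ, ρ ≠ 0 → Φ ρ = 0 := by
      intro ρ hρ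
      rcases hρ.lt_or_gt with h | h
      · have := transport_neg hp hu heq hrad h ht
        simp only [hΦdef]
        linarith
      · have := transport_pos hp hu heq hrad h ht
        simp only [hΦdef]
        linarith
    have hseq : Filter.Tendsto (fun n : ℕ => Φ (1 / (n + 1))) Filter.atTop (nhds (Φ 0)) := by
      apply (hcont.continuousAt).tendsto.comp
      exact tendsto_one_div_add_atTop_nhds_zero_nat
    have hseq0 : Filter.Tendsto (fun n : ℕ => Φ (1 / (n + 1))) Filter.atTop (nhds 0) := by
      have : (fun n : ℕ => Φ (1 / (n + 1))) = fun _ : ℕ => (0:ℝ) := by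
        funext n
        apply hzero
        positivity
      rw [this]
      exact tendsto_const_nhds
    have h0 : Φ 0 = 0 := tendsto_nhds_unique hseq hseq0
    simp only [hΦdef] at h0
    linarith
  · exact transport_pos hp hu heq hrad hr ht

/-- Final form of the transport equation. -/
private lemma transport_final {u : E3 × ℝ → ℝ} {p : ℝ} (hp : 3 ≤ p) (hu : ContDiff ℝ 3 u)
    (heq : ∀ (x : E3) (t : ℝ), 0 ≤ t →
      pt (pt u) (x, t) - lap u (x, t) + |pt u (x, t)| ^ (p - 1) * pt u (x, t) = 0)
    (hrad : RadialIn u) {r t : ℝ} (ht : 0 < t) :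
    d2 (Xplus u) (r, t) - d1 (Xplus u) (r, t)
      = -(p * |d2 (prof u) (r, t)| ^ (p - 1) / 2) * (Xplus u (r, t) - Xplus u (-r, t)) := by
  have h := transport_all hp hu heq hrad (r := r) ht
  have h2 : Xplus u (r, t) + Xminus u (r, t) = 2 * d2 (Wfun u) (r, t) := by
    rw [Xplus_eq, Xminus_eq]; ring
  have h3 : Xplus u (-r, t) = -Xminus u (r, t) := Xplus_reflect hu hrad ht.le r
  have h4 : Xplus u (r, t) - Xplus u (-r, t) = 2 * d2 (Wfun u) (r, t) := by
    rw [h3]; linarith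
  rw [h, h4]
  ring

/-- Derivatives of a function vanishing for large `|ρ|` and `0 ≤ σ ≤ T` also vanish there. -/
private lemma vanish_d {g : ℝ × ℝ → ℝ} (hg : Differentiable ℝ g) {R T : ℝ} (hR : 0 < R)
    (h0 : ∀ ρ σ : ℝ, R < |ρ| → 0 ≤ σ → σ ≤ T → g (ρ, σ) = 0) :
    ∀ ρ σ : ℝ, R < |ρ| → 0 ≤ σ → σ < T → d1 g (ρ, σ) = 0 ∧ d2 g (ρ, σ) = 0 := by
  intro ρ σ hρ hσ0 hσT
  have habs : ∀ s : ℝ, s ∈ Icc ρ (ρ + (|ρ| - R) / 2) → R < |s| := by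
    intro s hs
    rcases lt_trichotomy ρ 0 with h | h | h
    · have hρa : |ρ| = -ρ := abs_of_neg h
      have h1 : s ≤ (ρ - R) / 2 := by
        have := hs.2; rw [hρa] at this; linarith
      have h2 : s < -R := by nlinarith [hρ, hρa, abs_nonneg ρ]
      calc R < -s := by linarith
      _ ≤ |s| := neg_le_abs s
    · exfalso; rw [h] at hρ; simp at hρ; linarith
    · have hρa : |ρ| = ρ := abs_of_pos h
      have h2 : R < s := by
        have := hs.1; rw [hρa] at hρ; linarith
      exact h2.trans_le (le_abs_self s)
  constructor
  · have hd : HasDerivAt (fun ρ' : ℝ => g (ρ', σ)) (d1 g (ρ, σ)) ρ := hasDerivAt_d1 (hg _)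
    have hz : HasDerivAt (fun _ : ℝ => (0 : ℝ)) 0 ρ := hasDerivAt_const _ _
    refine deriv_eq_of_eq_on_right (d := ρ + (|ρ| - R) / 2) hd hz ?_ ?_
    · have : 0 < (|ρ| - R) / 2 := by linarith
      linarith
    · intro s hs
      exact h0 s σ (habs s hs) hσ0 hσT.le
  · have hd : HasDerivAt (fun σ' : ℝ => g (ρ, σ')) (d2 g (ρ, σ)) σ := hasDerivAt_d2 (hg _)
    have hz : HasDerivAt (fun _ : ℝ => (0 : ℝ)) 0 σ := hasDerivAt_const _ _
    refine deriv_eq_of_eq_on_right hd hz hσT ?_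
    intro s hs
    exact h0 ρ s hρ (le_trans hσ0 hs.1) hs.2

/-- `X₊` and `X₋` vanish for large `|ρ|`, times in `[0, T]`. -/
private lemma X_vanish {u : E3 × ℝ → ℝ} (hu : ContDiff ℝ 3 u) (hsupp : SpatialCptSupp u)
    {T : ℝ} (hT : 0 < T) :
    ∃ R > (0:ℝ), ∀ ρ σ : ℝ, R < |ρ| → 0 ≤ σ → σ ≤ T →
      Xplus u (ρ, σ) = 0 ∧ Xminus u (ρ, σ) = 0 := by
  obtain ⟨R, hR, hvan⟩ := hsupp (T + 2) (by linarith)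
  refine ⟨R, hR, ?_⟩
  have hF0 : ∀ ρ σ : ℝ, R < |ρ| → 0 ≤ σ → σ ≤ T + 2 → prof u (ρ, σ) = 0 := by
    intro ρ σ hρ h0 hT2
    exact hvan (ρ • e1) σ (by rw [norm_smul_e1]; exact hρ.le) h0 hT2
  have hFd : Differentiable ℝ (prof u) := (contDiff_prof hu).differentiable (by norm_num)
  have hdF0 := vanish_d hFd hR hF0
  have hW0 : ∀ ρ σ : ℝ, R < |ρ| → 0 ≤ σ → σ ≤ T + 1 → Wfun u (ρ, σ) = 0 := by
    intro ρ σ hρ h0 h1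
    have hh := (hdF0 ρ σ hρ h0 (by linarith)).2
    show ρ * d2 (prof u) (ρ, σ) = 0
    rw [hh]; ring
  have hWd : Differentiable ℝ (Wfun u) := (contDiff_Wfun hu).differentiable (by norm_num)
  have hdW0 := vanish_d hWd hR hW0
  intro ρ σ hρ h0 hT'
  have h := hdW0 ρ σ hρ h0 (by linarith)
  constructor
  · rw [Xplus_eq, h.1, h.2]; ring
  · rw [Xminus_eq, h.1, h.2]; ring

/-- The data bound: `|X₊(·, 0)| ≤ M` on all of `ℝ`. -/
private lemma X_bound_t0 {u : E3 × ℝ → ℝ} (hu : ContDiff ℝ 3 u) (hrad : RadialIn u)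
    (hsupp : SpatialCptSupp u) {M : ℝ}
    (hM : M = max (⨆ r : Ioi (0 : ℝ), |Xplus u ((r : ℝ), 0)|)
        (⨆ r : Ioi (0 : ℝ), |Xminus u ((r : ℝ), 0)|)) :
    ∀ ρ : ℝ, |Xplus u (ρ, 0)| ≤ M := by
  obtain ⟨R, hR, hvan⟩ := X_vanish hu hsupp (T := 1) one_pos
  have hline : Continuous (fun ρ : ℝ => ((ρ : ℝ), (0:ℝ))) :=
    continuous_id.prodMk continuous_const
  have hcp : Continuous (fun ρ : ℝ => |Xplus u (ρ, 0)|) :=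
    continuous_abs.comp ((contDiff_Xplus hu).continuous.comp hline)
  have hcm : Continuous (fun ρ : ℝ => |Xminus u (ρ, 0)|) :=
    continuous_abs.comp ((contDiff_Xminus hu).continuous.comp hline)
  have hbdd : ∀ (X : ℝ × ℝ → ℝ), Continuous (fun ρ : ℝ => |X (ρ, 0)|) →
      (∀ ρ : ℝ, R < |ρ| → X (ρ, 0) = 0) →
      BddAbove (Set.range (fun r : Ioi (0:ℝ) => |X ((r : ℝ), 0)|)) := by
    intro X hc hvX
    obtain ⟨a, hamem, hamax⟩ := (isCompact_Icc (a := (0:ℝ)) (b := R)).exists_isMaxOn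
      ⟨0, by constructor <;> simp [hR.le]⟩ (hc.continuousOn)
    refine ⟨|X (a, 0)|, ?_⟩
    rintro x ⟨r, rfl⟩
    rcases le_or_gt (r : ℝ) R with h | h
    · exact hamax ⟨(r.2 : (0:ℝ) < r).le, h⟩
    · have : X ((r : ℝ), 0) = 0 := hvX r (by rw [abs_of_pos (r.2 : (0:ℝ) < r)]; exact h)
      simp only [this, abs_zero]
      exact abs_nonneg _
  have hbddp := hbdd (Xplus u) hcp (fun ρ h => (hvan ρ 0 h le_rfl one_pos.le).1)
  have hbddm := hbdd (Xminus u) hcm (fun ρ h => (hvan ρ 0 h le_rfl one_pos.le).2)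
  have hplus : ∀ ρ : ℝ, 0 < ρ → |Xplus u (ρ, 0)| ≤ M := by
    intro ρ hρ
    have := le_ciSup hbddp ⟨ρ, hρ⟩
    rw [hM]
    exact this.trans (le_max_left _ _)
  have hminus : ∀ ρ : ℝ, 0 < ρ → |Xminus u (ρ, 0)| ≤ M := by
    intro ρ hρ
    have := le_ciSup hbddm ⟨ρ, hρ⟩
    rw [hM]
    exact this.trans (le_max_right _ _)
  intro ρ
  rcases lt_trichotomy ρ 0 with h | h | h
  · have hrefl : Xplus u (ρ, 0) = -Xminus u (-ρ, 0) := by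
      have := Xplus_reflect hu hrad le_rfl (-ρ)
      rw [neg_neg] at this
      exact this
    rw [hrefl, abs_neg]
    exact hminus (-ρ) (by linarith)
  · subst h
    have hlim : Filter.Tendsto (fun ρ : ℝ => |Xplus u (ρ, 0)|) (nhdsWithin 0 (Ioi 0))
        (nhds |Xplus u (0, 0)|) := (hcp.continuousAt).continuousWithinAt
    refine le_of_tendsto hlim ?_
    exact Filter.eventually_of_mem self_mem_nhdsWithin (fun ρ hρ => hplus ρ hρ)
  · exact hplus ρ h

/-- Global bound `|X₊| ≤ M` up to time `T`. -/
private lemma X_bound_global {u : E3 × ℝ → ℝ} {p : ℝ} (hp : 3 ≤ p) (hu : ContDiff ℝ 3 u)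
    (heq : ∀ (x : E3) (t : ℝ), 0 ≤ t →
      pt (pt u) (x, t) - lap u (x, t) + |pt u (x, t)| ^ (p - 1) * pt u (x, t) = 0)
    (hrad : RadialIn u) (hsupp : SpatialCptSupp u) {M : ℝ}
    (hM : M = max (⨆ r : Ioi (0 : ℝ), |Xplus u ((r : ℝ), 0)|)
        (⨆ r : Ioi (0 : ℝ), |Xminus u ((r : ℝ), 0)|))
    {T : ℝ} (hT : 0 < T) :
    ∀ ρ σ : ℝ, 0 ≤ σ → σ ≤ T → |Xplus u (ρ, σ)| ≤ M := by
  obtain ⟨R, hR, hvan⟩ := X_vanish hu hsupp hT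
  have hXc : Continuous (Xplus u) := (contDiff_Xplus hu).continuous
  have hKc : IsCompact ((Icc (-R) R ×ˢ Icc 0 T) : Set (ℝ × ℝ)) :=
    isCompact_Icc.prod isCompact_Icc
  have hKne : ((Icc (-R) R ×ˢ Icc 0 T) : Set (ℝ × ℝ)).Nonempty := by
    refine ⟨(0, 0), ⟨?_, ?_⟩, ⟨?_, ?_⟩⟩ <;> simp <;> linarith
  obtain ⟨zstar, hzmem, hzmax⟩ := hKc.exists_isMaxOn hKne
    ((continuous_abs.comp hXc).continuousOn)
  set C := |Xplus u zstar| with hC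
  have hC0 : 0 ≤ C := abs_nonneg _
  have glob : ∀ ρ σ : ℝ, 0 ≤ σ → σ ≤ T → |Xplus u (ρ, σ)| ≤ C := by
    intro ρ σ h0 h1
    rcases le_or_gt |ρ| R with h | h
    · exact hzmax ⟨abs_le.1 h, h0, h1⟩
    · rw [(hvan ρ σ h h0 h1).1, abs_zero]; exact hC0
  have ht0 := X_bound_t0 hu hrad hsupp hM
  have hscore : C ≤ M := by
    by_contra hMC
    push_neg at hMC
    -- the max is attained at positive time
    have hzt : 0 < zstar.2 := by
      rcases (lt_or_eq_of_le hzmem.2.1) with h | h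
      · exact h
      · exfalso
        have hz0 : zstar = (zstar.1, (0:ℝ)) := by
          rw [h]
        have : C ≤ M := by rw [hC, hz0]; exact ht0 zstar.1
        linarith
    set tstar := zstar.2 with htstar
    set r0 := zstar.1 + zstar.2 with hr0
    set φ : ℝ → ℝ := fun s => Xplus u (r0 - s, s) with hφ
    set q : ℝ → ℝ := fun s => Xplus u (-(r0 - s), s) with hq
    set b : ℝ → ℝ := fun s => p * |d2 (prof u) (r0 - s, s)| ^ (p - 1) / 2 with hb
    have hγc : Continuous (fun s : ℝ => ((r0 - s : ℝ), s)) :=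
      (continuous_const.sub continuous_id).prodMk continuous_id
    have hγc' : Continuous (fun s : ℝ => ((-(r0 - s) : ℝ), s)) :=
      ((continuous_const.sub continuous_id).neg).prodMk continuous_id
    have hbc : Continuous b := by
      have c3 : Continuous (d2 (prof u)) :=
        (contDiff_d2 (contDiff_prof hu) (by norm_num) : ContDiff ℝ 2 _).continuous
      have : Continuous (fun z : ℝ × ℝ => p * |d2 (prof u) z| ^ (p - 1) / 2) := by
        have habs : Continuous (fun z : ℝ × ℝ => |d2 (prof u) z|) := continuous_abs.comp c3
        exact (continuous_const.mul (habs.rpow_const (fun x => Or.inr (by linarith)))).div_const 2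
      exact this.comp hγc
    have hb0 : ∀ s, 0 ≤ b s := by
      intro s
      have : (0:ℝ) ≤ |d2 (prof u) (r0 - s, s)| ^ (p - 1) :=
        Real.rpow_nonneg (abs_nonneg _) _
      have hp0 : (0:ℝ) < p := by linarith
      simp only [hb]
      positivity
    obtain ⟨ε, hε, hεf⟩ : ∃ ε : ℝ, |ε| = 1 ∧ ε * Xplus u zstar = C := by
      rcases abs_cases (Xplus u zstar) with ⟨h1, _⟩ | ⟨h1, _⟩
      · exact ⟨1, by norm_num, by rw [one_mul, hC, h1]⟩
      · exact ⟨-1, by norm_num, by rw [hC, h1]; ring⟩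
    set A : ℝ → ℝ := fun s => ∫ τ in (0:ℝ)..s, b τ with hA
    have hAd : ∀ s, HasDerivAt A (b s) s := fun s =>
      (hbc.integral_hasStrictDerivAt 0 s).hasDerivAt
    have hAc : Continuous A := by
      have : Differentiable ℝ A := fun s => (hAd s).differentiableAt
      exact this.continuous
    set ψ : ℝ → ℝ := fun s => Real.exp (A s) * (C - ε * φ s) with hψ
    have hφd : ∀ s : ℝ, 0 < s → HasDerivAt φ (-(b s) * (φ s - q s)) s := by
      intro s hs
      have hγ : HasDerivAt (fun s : ℝ => ((r0 - s : ℝ), s)) (((-1 : ℝ), (1:ℝ)) : ℝ × ℝ) s := by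
        refine HasDerivAt.prodMk ?_ (hasDerivAt_id s)
        simpa using (hasDerivAt_id s).const_sub r0
      have hXd : DifferentiableAt ℝ (Xplus u) ((r0 - s : ℝ), s) :=
        ((contDiff_Xplus hu).differentiable (by norm_num)) _
      have hcomp := hXd.hasFDerivAt.comp_hasDerivAt (f := fun s : ℝ => ((r0 - s : ℝ), s)) s hγ
      have hval : fderiv ℝ (Xplus u) ((r0 - s : ℝ), s) ((-1:ℝ), (1:ℝ))
          = d2 (Xplus u) ((r0 - s : ℝ), s) - d1 (Xplus u) ((r0 - s : ℝ), s) := by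
        have hv : (((-1:ℝ), (1:ℝ)) : ℝ × ℝ) = ((0:ℝ),(1:ℝ)) - ((1:ℝ),(0:ℝ)) := by norm_num
        rw [hv, map_sub]
        rfl
      rw [hval, transport_final hp hu heq hrad hs] at hcomp
      exact hcomp
    have hψd : ∀ s : ℝ, 0 < s →
        HasDerivAt ψ (Real.exp (A s) * (b s * (C - ε * q s))) s := by
      intro s hs
      have h1 : HasDerivAt (fun s => Real.exp (A s)) (Real.exp (A s) * b s) s := (hAd s).exp
      have h2 : HasDerivAt (fun s => C - ε * φ s) (-(ε * (-(b s) * (φ s - q s)))) s :=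
        ((hφd s hs).const_mul ε).const_sub C
      have hm := h1.mul h2
      refine hm.congr_deriv ?_
      ring
    have hψc : Continuous ψ := by
      exact (Real.continuous_exp.comp hAc).mul
        (continuous_const.sub (continuous_const.mul (hXc.comp hγc)))
    have hmono : MonotoneOn ψ (Icc 0 tstar) := by
      apply monotoneOn_of_deriv_nonneg (convex_Icc 0 tstar) hψc.continuousOn
      · intro x hx
        rw [interior_Icc] at hx
        exact ((hψd x hx.1).differentiableAt).differentiableWithinAt
      · intro x hx
        rw [interior_Icc] at hx
        rw [(hψd x hx.1).deriv]
        have hqb : ε * q x ≤ C := by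
          calc ε * q x ≤ |ε * q x| := le_abs_self _
          _ = |q x| := by rw [abs_mul, hε, one_mul]
          _ ≤ C := glob _ x hx.1.le (hx.2.le.trans hzmem.2.2)
        have he0 : (0:ℝ) ≤ Real.exp (A x) := (Real.exp_pos _).le
        have := hb0 x
        have h9 : (0:ℝ) ≤ C - ε * q x := by linarith
        positivity
    have hψ0 : 0 < ψ 0 := by
      have hA0 : A 0 = 0 := intervalIntegral.integral_same
      have hφ0 : ε * φ 0 ≤ M := by
        calc ε * φ 0 ≤ |ε * φ 0| := le_abs_self _
        _ = |φ 0| := by rw [abs_mul, hε, one_mul]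
        _ ≤ M := ht0 (r0 - 0)
      simp only [hψ, hA0, Real.exp_zero, one_mul]
      linarith
    have hψt : ψ tstar = 0 := by
      have hφt : φ tstar = Xplus u zstar := by
        simp only [hφ]
        have : r0 - tstar = zstar.1 := by rw [hr0, htstar]; ring
        rw [this, htstar, Prod.mk.eta]
      simp only [hψ, hφt, hεf]
      ring
    have hle := hmono (left_mem_Icc.2 hzt.le) (right_mem_Icc.2 hzt.le) hzt.le
    linarith
  intro ρ σ h0 h1
  exact (glob ρ σ h0 h1).trans hscore

/-- pointwise bounds `r|∂ₜ²f| ≤ M`, `|∂ₜf| ≤ M`, `r|∂ᵣ∂ₜf| ≤ 2M` with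
`M = max(sup_r |X₊(·,0)|, sup_r |X₋(·,0)|)`. -/
theorem pointwise_bounds_from_X
    (p : ℝ) (hp : 3 ≤ p)
    (u : E3 × ℝ → ℝ) (hu : ContDiff ℝ 3 u)
    (heq : ∀ (x : E3) (t : ℝ), 0 ≤ t →
      pt (pt u) (x, t) - lap u (x, t) + |pt u (x, t)| ^ (p - 1) * pt u (x, t) = 0)
    (hrad : RadialIn u) (hsupp : SpatialCptSupp u)
    (M : ℝ)
    (hM : M = max (⨆ r : Ioi (0 : ℝ), |Xplus u ((r : ℝ), 0)|)
        (⨆ r : Ioi (0 : ℝ), |Xminus u ((r : ℝ), 0)|)) :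
    ∀ (r t : ℝ), 0 < r → 0 ≤ t →
      r * |d2 (d2 (prof u)) (r, t)| ≤ M ∧
      |d2 (prof u) (r, t)| ≤ M ∧
      r * |d1 (d2 (prof u)) (r, t)| ≤ 2 * M := by
  intro r t hr ht
  have hTpos : (0:ℝ) < t + 1 := by linarith
  have hXb : ∀ ρ σ : ℝ, 0 ≤ σ → σ ≤ t + 1 → |Xplus u (ρ, σ)| ≤ M :=
    X_bound_global hp hu heq hrad hsupp hM hTpos
  have hXmb : ∀ ρ σ : ℝ, 0 ≤ σ → σ ≤ t + 1 → |Xminus u (ρ, σ)| ≤ M := by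
    intro ρ σ h0 h1
    have hrefl := Xplus_reflect hu hrad h0 ρ
    calc |Xminus u (ρ, σ)| = |Xplus u (-ρ, σ)| := by rw [hrefl, abs_neg]
    _ ≤ M := hXb _ _ h0 h1
  have htT : t ≤ t + 1 := by linarith
  -- bound on d2 W
  have hd2W_bound : |d2 (Wfun u) (r, t)| ≤ M := by
    have h2 : Xplus u (r, t) + Xminus u (r, t) = 2 * d2 (Wfun u) (r, t) := by
      rw [Xplus_eq, Xminus_eq]; ring
    have hb1 := hXb r t ht htT
    have hb2 := hXmb r t ht htT
    have htri : |2 * d2 (Wfun u) (r, t)| ≤ 2 * M := by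
      rw [← h2]
      calc |Xplus u (r, t) + Xminus u (r, t)| ≤ |Xplus u (r, t)| + |Xminus u (r, t)| :=
        abs_add_le _ _
      _ ≤ 2 * M := by linarith
    rw [abs_mul] at htri
    rw [show |(2:ℝ)| = 2 by norm_num] at htri
    linarith
  -- bound on d1 W, at every radius
  have hd1W_bound : ∀ x : ℝ, |d1 (Wfun u) (x, t)| ≤ M := by
    intro x
    have h2 : Xplus u (x, t) - Xminus u (x, t) = 2 * d1 (Wfun u) (x, t) := by
      rw [Xplus_eq, Xminus_eq]; ring
    have hb1 := hXb x t ht htT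
    have hb2 := hXmb x t ht htT
    have htri : |2 * d1 (Wfun u) (x, t)| ≤ 2 * M := by
      rw [← h2, sub_eq_add_neg]
      calc |Xplus u (x, t) + -Xminus u (x, t)| ≤ |Xplus u (x, t)| + |-Xminus u (x, t)| :=
        abs_add_le _ _
      _ ≤ 2 * M := by rw [abs_neg]; linarith
    rw [abs_mul] at htri
    rw [show |(2:ℝ)| = 2 by norm_num] at htri
    linarith
  -- second conclusion via the mean value inequality
  have part2 : |d2 (prof u) (r, t)| ≤ M := by
    have hWd : Differentiable ℝ (Wfun u) := (contDiff_Wfun hu).differentiable (by norm_num)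
    have hder : ∀ x ∈ Icc (0:ℝ) r, HasDerivWithinAt (fun ρ : ℝ => Wfun u (ρ, t))
        (d1 (Wfun u) (x, t)) (Icc 0 r) x :=
      fun x _ => (hasDerivAt_d1 (hWd _)).hasDerivWithinAt
    have hbd : ∀ x ∈ Ico (0:ℝ) r, ‖d1 (Wfun u) (x, t)‖ ≤ M := by
      intro x _
      rw [Real.norm_eq_abs]
      exact hd1W_bound x
    have hmvt := norm_image_sub_le_of_norm_deriv_le_segment' hder hbd r
      (right_mem_Icc.2 hr.le)
    have hW0 : Wfun u ((0:ℝ), t) = 0 := by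
      show (0:ℝ) * _ = 0
      ring
    rw [hW0, sub_zero] at hmvt
    have hWr : Wfun u ((r:ℝ), t) = r * d2 (prof u) (r, t) := rfl
    rw [hWr, sub_zero, Real.norm_eq_abs, abs_mul, abs_of_pos hr] at hmvt
    have hrr : r * |d2 (prof u) (r, t)| ≤ M * r := by linarith
    nlinarith [abs_nonneg (d2 (prof u) (r, t))]
  refine ⟨?_, part2, ?_⟩
  · -- first conclusion
    have h1 : d2 (Wfun u) (r, t) = r * d2 (d2 (prof u)) (r, t) := d2W_eq hu (r, t)
    calc r * |d2 (d2 (prof u)) (r, t)| = |r * d2 (d2 (prof u)) (r, t)| := by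
          rw [abs_mul, abs_of_pos hr]
    _ = |d2 (Wfun u) (r, t)| := by rw [h1]
    _ ≤ M := hd2W_bound
  · -- third conclusion
    have h1 : d1 (Wfun u) (r, t) = d2 (prof u) (r, t) + r * d1 (d2 (prof u)) (r, t) :=
      d1W_eq hu (r, t)
    have h2 : r * d1 (d2 (prof u)) (r, t) = d1 (Wfun u) (r, t) - d2 (prof u) (r, t) := by
      rw [h1]; ring
    calc r * |d1 (d2 (prof u)) (r, t)| = |r * d1 (d2 (prof u)) (r, t)| := by
          rw [abs_mul, abs_of_pos hr]
    _ = |d1 (Wfun u) (r, t) - d2 (prof u) (r, t)| := by rw [h2]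
    _ ≤ |d1 (Wfun u) (r, t)| + |d2 (prof u) (r, t)| := by
          rw [sub_eq_add_neg]
          exact (abs_add_le _ _).trans (by rw [abs_neg])
    _ ≤ 2 * M := by
          have := hd1W_bound r
          linarith
end
end

section
/- Let p ≥ 3 be a real number and let u : ℝ × [0,∞) → ℝ be a C³ solution of the one-dimensional dissipative wave equation ∂ₜ²u − ∂ₓ²u + |∂ₜu|^{p−1}∂ₜu = 0 such that for every T > 0 there is R > 0 with u(x,t) = 0 whenever |x| ≥ R and 0 ≤ t ≤ T. Define Y₊ = (∂ₜ + ∂ₓ)∂ₜu and Y₋ = (∂ₜ − ∂ₓ)∂ₜu. Then the quantity max( sup_{x∈ℝ}|Y₊(x,t)|, sup_{x∈ℝ}|Y₋(x,t)| ) is nonincreasing in t on [0,∞). -/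
open MeasureTheory Set Real
open scoped ENNReal

noncomputable section

lemma d_smooth {n : ℕ∞} (g : ℝ × ℝ → ℝ) (hg : ContDiff ℝ (n + 1) g) (w : ℝ × ℝ) :
    ContDiff ℝ n (fun z => fderiv ℝ g z w) :=
  (hg.fderiv_right le_rfl).clm_apply contDiff_const

lemma fderiv_dw (g : ℝ × ℝ → ℝ) (hg : ContDiff ℝ 2 g) (z w₁ w₂ : ℝ × ℝ) :
    fderiv ℝ (fun z => fderiv ℝ g z w₂) z w₁ = fderiv ℝ (fderiv ℝ g) z w₁ w₂ := by
  have hdiff : DifferentiableAt ℝ (fderiv ℝ g) z :=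
    ((hg.fderiv_right (m := 1) (by norm_num)).differentiable one_ne_zero).differentiableAt
  rw [fderiv_clm_apply hdiff (differentiableAt_const _)]
  simp

lemma clairaut (g : ℝ × ℝ → ℝ) (hg : ContDiff ℝ 2 g) (z : ℝ × ℝ) :
    d1 (d2 g) z = d2 (d1 g) z := by
  have hs : IsSymmSndFDerivAt ℝ g z :=
    hg.contDiffAt.isSymmSndFDerivAt (by norm_num)
  have h1 := fderiv_dw g hg z ((1:ℝ),(0:ℝ)) ((0:ℝ),(1:ℝ))
  have h2 := fderiv_dw g hg z ((0:ℝ),(1:ℝ)) ((1:ℝ),(0:ℝ))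
  exact h1.trans ((hs _ _).trans h2.symm)

lemma hasDerivAt_npow (p : ℝ) (hp : 3 ≤ p) (x : ℝ) :
    HasDerivAt (fun z : ℝ => |z| ^ (p - 1) * z) (p * |x| ^ (p - 1)) x := by
  rcases lt_trichotomy x 0 with hx | hx | hx
  · have key : HasDerivAt (fun y : ℝ => -((-y) ^ p)) (p * (-x) ^ (p - 1)) x := by
      have h1 : HasDerivAt (fun y : ℝ => (-y : ℝ)) (-1) x := (hasDerivAt_id x).neg
      have h2 : HasDerivAt (fun z : ℝ => z ^ p) (p * (-x) ^ (p - 1)) (-x) :=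
        Real.hasDerivAt_rpow_const (Or.inl (by linarith))
      have : HasDerivAt (fun y : ℝ => -((-y) ^ p)) (-(p * (-x) ^ (p - 1) * -1)) x :=
        (h2.comp x h1).neg
      convert this using 1
      ring
    have hev : (fun y : ℝ => -((-y) ^ p)) =ᶠ[nhds x] fun z : ℝ => |z| ^ (p - 1) * z := by
      filter_upwards [Iio_mem_nhds hx] with y hy
      have hy' : (0:ℝ) < -y := by simpa using hy
      have : |y| = -y := abs_of_neg hy
      rw [this, show (-y : ℝ) ^ p = (-y) ^ (p - 1) * (-y) by
        rw [← Real.rpow_add_one hy'.ne' (p - 1)]; norm_num]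
      ring
    have := key.congr_of_eventuallyEq hev.symm
    simpa [abs_of_neg hx] using this
  · subst hx
    have habs : Filter.Tendsto (fun y : ℝ => |y| ^ (p - 1)) (nhdsWithin 0 {(0:ℝ)}ᶜ) (nhds 0) := by
      have hc : ContinuousAt (fun y : ℝ => |y| ^ (p - 1)) 0 :=
        (continuous_abs.rpow_const fun _ => Or.inr (by linarith)).continuousAt
      simpa [abs_zero, Real.zero_rpow (show p - 1 ≠ 0 by linarith)]
        using hc.continuousWithinAt.tendsto
    rw [hasDerivAt_iff_tendsto_slope]
    have h0 : p * |(0:ℝ)| ^ (p - 1) = 0 := by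
      simp [Real.zero_rpow (by linarith : p - 1 ≠ 0)]
    rw [h0]
    refine habs.congr' ?_
    filter_upwards [self_mem_nhdsWithin] with y hy
    have hy : y ≠ 0 := hy
    simp [slope_def_field]
    field_simp
  · have key : HasDerivAt (fun y : ℝ => y ^ p) (p * x ^ (p - 1)) x :=
      Real.hasDerivAt_rpow_const (Or.inl (ne_of_gt hx))
    have hev : (fun y : ℝ => y ^ p) =ᶠ[nhds x] fun z : ℝ => |z| ^ (p - 1) * z := by
      filter_upwards [Ioi_mem_nhds hx] with y hy
      have hy' : (0:ℝ) < y := hy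
      rw [abs_of_pos hy', show (y : ℝ) ^ p = y ^ (p - 1) * y by
        rw [← Real.rpow_add_one hy'.ne' (p - 1)]; norm_num]
    have := key.congr_of_eventuallyEq hev.symm
    simpa [abs_of_pos hx] using this

lemma d1_contDiff {m n : WithTop ℕ∞} {g : ℝ × ℝ → ℝ} (hg : ContDiff ℝ n g)
    (h : m + 1 ≤ n) : ContDiff ℝ m (d1 g) :=
  (hg.fderiv_right h).clm_apply contDiff_const

lemma d2_contDiff {m n : WithTop ℕ∞} {g : ℝ × ℝ → ℝ} (hg : ContDiff ℝ n g)
    (h : m + 1 ≤ n) : ContDiff ℝ m (d2 g) :=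
  (hg.fderiv_right h).clm_apply contDiff_const

lemma vanish_d_s16 {g : ℝ × ℝ → ℝ} (hg : Differentiable ℝ g) {S : Set (ℝ × ℝ)}
    (hconv : Convex ℝ S) (hint : (interior S).Nonempty)
    (hg0 : ∀ z ∈ S, g z = 0) {z : ℝ × ℝ} (hz : z ∈ S) (w : ℝ × ℝ) :
    fderiv ℝ g z w = 0 := by
  have hU := uniqueDiffOn_convex hconv hint
  have h1 : fderiv ℝ g z = fderivWithin ℝ g S z := ((hg z).fderivWithin (hU z hz)).symm
  have h2 : fderivWithin ℝ g S z = fderivWithin ℝ (fun _ => (0:ℝ)) S z :=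
    fderivWithin_congr hg0 (hg0 z hz)
  rw [h1, h2, fderivWithin_const_apply 0]
  simp

lemma clm_eval (L : ℝ × ℝ →L[ℝ] ℝ) (a b : ℝ) : L (a, b) = a * L (1, 0) + b * L (0, 1) := by
  have h : ((a, b) : ℝ × ℝ) = a • ((1:ℝ), (0:ℝ)) + b • ((0:ℝ), (1:ℝ)) := by
    simp [Prod.ext_iff]
  rw [h, map_add, _root_.map_smul, _root_.map_smul, smul_eq_mul, smul_eq_mul]

lemma dY_eq (p : ℝ) (hp : 3 ≤ p) (u : ℝ × ℝ → ℝ) (hu : ContDiff ℝ 3 u)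
    (heq : ∀ x t : ℝ, 0 ≤ t →
      d2 (d2 u) (x, t) - d1 (d1 u) (x, t) + |d2 u (x, t)| ^ (p - 1) * d2 u (x, t) = 0)
    (σ : ℝ) (hσ : σ * σ = 1) {z : ℝ × ℝ} (hz : 0 < z.2) :
    (fderiv ℝ (fun y => d2 (d2 u) y + σ * d1 (d2 u) y) z) (-σ, 1)
      = -(p * |d2 u z| ^ (p - 1) * d2 (d2 u) z) := by
  have hv2 : ContDiff ℝ 2 (d2 u) := d2_contDiff hu (by norm_num)
  have hd1u2 : ContDiff ℝ 2 (d1 u) := d1_contDiff hu (by norm_num)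
  have h22 : ContDiff ℝ 1 (d2 (d2 u)) := d2_contDiff hv2 (by norm_num)
  have h12 : ContDiff ℝ 1 (d1 (d2 u)) := d1_contDiff hv2 (by norm_num)
  have h11 : ContDiff ℝ 1 (d1 (d1 u)) := d1_contDiff hd1u2 (by norm_num)
  have hD22 : DifferentiableAt ℝ (d2 (d2 u)) z := (h22.differentiable one_ne_zero).differentiableAt
  have hD12 : DifferentiableAt ℝ (d1 (d2 u)) z := (h12.differentiable one_ne_zero).differentiableAt
  have hD11 : DifferentiableAt ℝ (d1 (d1 u)) z := (h11.differentiable one_ne_zero).differentiableAt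
  -- Step A : expand the fderiv of Yσ
  have hA : (fderiv ℝ (fun y => d2 (d2 u) y + σ * d1 (d2 u) y) z) (-σ, 1)
      = d2 (d2 (d2 u)) z - d1 (d1 (d2 u)) z := by
    have h1 : fderiv ℝ (fun y => d2 (d2 u) y + σ * d1 (d2 u) y) z
        = fderiv ℝ (d2 (d2 u)) z + σ • fderiv ℝ (d1 (d2 u)) z := by
      rw [fderiv_fun_add hD22 (hD12.const_mul σ), fderiv_const_mul hD12]
    rw [h1]
    have e1 := clm_eval (fderiv ℝ (d2 (d2 u)) z) (-σ) 1
    have e2 := clm_eval (fderiv ℝ (d1 (d2 u)) z) (-σ) 1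
    have hcross : d1 (d2 (d2 u)) z = d2 (d1 (d2 u)) z := clairaut (d2 u) hv2 z
    have : d1 (d2 (d2 u)) z = (fderiv ℝ (d2 (d2 u)) z) (1, 0) := rfl
    simp only [ContinuousLinearMap.add_apply, ContinuousLinearMap.coe_smul',
      Pi.smul_apply, smul_eq_mul]
    rw [e1, e2]
    show -σ * d1 (d2 (d2 u)) z + 1 * d2 (d2 (d2 u)) z
        + σ * (-σ * d1 (d1 (d2 u)) z + 1 * d2 (d1 (d2 u)) z)
        = d2 (d2 (d2 u)) z - d1 (d1 (d2 u)) z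
    rw [hcross]
    linear_combination (-(d1 (d1 (d2 u)) z)) * hσ
  -- Step B : commute derivatives
  have hB : d1 (d1 (d2 u)) z = d2 (d1 (d1 u)) z := by
    have b2 : d2 (d1 u) = d1 (d2 u) :=
      funext fun y => (clairaut u (hu.of_le (by norm_num)) y).symm
    have b1 : d1 (d2 (d1 u)) z = d2 (d1 (d1 u)) z := clairaut (d1 u) hd1u2 z
    rw [← b1, b2]
  -- Step C : use the PDE
  have hC : d2 (d2 (d2 u)) z - d2 (d1 (d1 u)) z
      = -(p * |d2 u z| ^ (p - 1) * d2 (d2 u) z) := by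
    set w : ℝ × ℝ → ℝ := fun y => d2 (d2 u) y - d1 (d1 u) y with hw
    have hwe : ∀ y : ℝ × ℝ, 0 ≤ y.2 → w y = -(|d2 u y| ^ (p - 1) * d2 u y) := by
      intro y hy
      have := heq y.1 y.2 hy
      simp only [hw]
      linarith [this]
    have hopen : IsOpen {y : ℝ × ℝ | 0 < y.2} := isOpen_lt continuous_const continuous_snd
    have hev : w =ᶠ[nhds z] fun y => -(|d2 u y| ^ (p - 1) * d2 u y) := by
      filter_upwards [hopen.mem_nhds hz] with y hy
      exact hwe y (le_of_lt hy)
    have hfw : fderiv ℝ w z = fderiv ℝ (fun y => -(|d2 u y| ^ (p - 1) * d2 u y)) z :=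
      hev.fderiv_eq
    have hrhs : HasFDerivAt (fun y => |d2 u y| ^ (p - 1) * d2 u y)
        ((p * |d2 u z| ^ (p - 1)) • fderiv ℝ (d2 u) z) z :=
      (hasDerivAt_npow p hp (d2 u z)).comp_hasFDerivAt z
        ((hv2.differentiable (by norm_num)).differentiableAt).hasFDerivAt
    have hfr : fderiv ℝ (fun y => -(|d2 u y| ^ (p - 1) * d2 u y)) z
        = -((p * |d2 u z| ^ (p - 1)) • fderiv ℝ (d2 u) z) := hrhs.neg.fderiv
    have hsub : fderiv ℝ w z = fderiv ℝ (d2 (d2 u)) z - fderiv ℝ (d1 (d1 u)) z := by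
      rw [hw]
      exact fderiv_fun_sub hD22 hD11
    have := congrArg (fun L : ℝ × ℝ →L[ℝ] ℝ => L ((0:ℝ), (1:ℝ))) (hsub.symm.trans (hfw.trans hfr))
    simp only [ContinuousLinearMap.sub_apply, ContinuousLinearMap.neg_apply,
      ContinuousLinearMap.coe_smul', Pi.smul_apply, smul_eq_mul] at this
    calc d2 (d2 (d2 u)) z - d2 (d1 (d1 u)) z
        = (fderiv ℝ (d2 (d2 u)) z) ((0:ℝ),(1:ℝ)) - (fderiv ℝ (d1 (d1 u)) z) ((0:ℝ),(1:ℝ)) := rfl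
      _ = -(p * |d2 u z| ^ (p - 1) * (fderiv ℝ (d2 u) z) ((0:ℝ),(1:ℝ))) := by
          rw [this]
      _ = -(p * |d2 u z| ^ (p - 1) * d2 (d2 u) z) := rfl
  rw [hA, hB, hC]

set_option maxHeartbeats 2000000 in
lemma char_bound (p : ℝ) (hp : 3 ≤ p) (u : ℝ × ℝ → ℝ) (hu : ContDiff ℝ 3 u)
    (heq : ∀ x t : ℝ, 0 ≤ t →
      d2 (d2 u) (x, t) - d1 (d1 u) (x, t) + |d2 u (x, t)| ^ (p - 1) * d2 u (x, t) = 0)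
    (σ : ℝ) (hσ : σ * σ = 1) (a τ₀ x₀ : ℝ) (ha : 0 ≤ a) (hτ₀ : a ≤ τ₀)
    (A Ms : ℝ) (hA0 : 0 ≤ A)
    (hF : ∀ x τ : ℝ, a ≤ τ → τ ≤ τ₀ →
      |d2 (d2 u) (x, τ) + σ * d1 (d2 u) (x, τ)| ≤ A ∧
      |d2 (d2 u) (x, τ) - σ * d1 (d2 u) (x, τ)| ≤ A)
    (hend : A = |d2 (d2 u) (x₀, τ₀) + σ * d1 (d2 u) (x₀, τ₀)|)
    (hMs : ∀ x : ℝ, |d2 (d2 u) (x, a) + σ * d1 (d2 u) (x, a)| ≤ Ms) :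
    A ≤ Ms := by
  have hv2 : ContDiff ℝ 2 (d2 u) := d2_contDiff hu (by norm_num)
  have h22 : ContDiff ℝ 1 (d2 (d2 u)) := d2_contDiff hv2 (by norm_num)
  have h12 : ContDiff ℝ 1 (d1 (d2 u)) := d1_contDiff hv2 (by norm_num)
  set Y : ℝ × ℝ → ℝ := fun z => d2 (d2 u) z + σ * d1 (d2 u) z with hYdef
  set γ : ℝ → ℝ × ℝ := fun τ => (x₀ + σ * (τ₀ - τ), τ) with hγdef
  set g : ℝ → ℝ := fun τ => Y (γ τ) with hgdef
  set q : ℝ → ℝ := fun τ => p * |d2 u (γ τ)| ^ (p - 1) with hqdef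
  have hYc1 : ContDiff ℝ 1 Y := h22.add (contDiff_const.mul h12)
  have hγc : Continuous γ := by
    apply Continuous.prodMk
    · exact continuous_const.add (continuous_const.mul (continuous_const.sub continuous_id))
    · exact continuous_id
  have hγd : ∀ τ : ℝ, HasDerivAt γ (-σ, 1) τ := by
    intro τ
    have h1 : HasDerivAt (fun τ : ℝ => x₀ + σ * (τ₀ - τ)) (-σ) τ := by
      simpa using (((hasDerivAt_id τ).const_sub τ₀).const_mul σ).const_add x₀
    exact h1.prodMk (hasDerivAt_id τ)
  have hgcont : Continuous g := (hYc1.continuous).comp hγc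
  have hqcont : Continuous q := by
    apply continuous_const.mul
    exact (((hv2.continuous).comp hγc).abs).rpow_const fun x => Or.inr (by linarith)
  have hq0 : ∀ τ, 0 ≤ q τ := fun τ =>
    mul_nonneg (by linarith) (Real.rpow_nonneg (abs_nonneg _) _)
  -- derivative of g at positive times
  have hg' : ∀ τ : ℝ, 0 < τ → HasDerivAt g (-(q τ) * d2 (d2 u) (γ τ)) τ := by
    intro τ hτ
    have hYd : HasFDerivAt Y (fderiv ℝ Y (γ τ)) (γ τ) :=
      ((hYc1.differentiable one_ne_zero) (γ τ)).hasFDerivAt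
    have := hYd.comp_hasDerivAt τ (hγd τ)
    have hzpos : (0:ℝ) < (γ τ).2 := hτ
    have hval := dY_eq p hp u hu heq σ hσ hzpos
    rw [hYdef] at this
    rw [show (fderiv ℝ Y (γ τ)) (-σ, 1)
        = -(p * |d2 u (γ τ)| ^ (p - 1) * d2 (d2 u) (γ τ)) from hval] at this
    have : HasDerivAt g (-(p * |d2 u (γ τ)| ^ (p - 1) * d2 (d2 u) (γ τ))) τ := this
    convert this using 1
    rw [hqdef]; ring
  -- bounds along the characteristic
  have hgA : ∀ τ ∈ Icc a τ₀, |g τ| ≤ A := fun τ hτ =>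
    (hF (x₀ + σ * (τ₀ - τ)) τ hτ.1 hτ.2).1
  have hhA : ∀ τ ∈ Icc a τ₀,
      |d2 (d2 u) (γ τ) - σ * d1 (d2 u) (γ τ)| ≤ A := fun τ hτ =>
    (hF (x₀ + σ * (τ₀ - τ)) τ hτ.1 hτ.2).2
  have hgh : ∀ τ : ℝ, 2 * d2 (d2 u) (γ τ)
      = g τ + (d2 (d2 u) (γ τ) - σ * d1 (d2 u) (γ τ)) := by
    intro τ; rw [hgdef, hYdef]; ring
  -- the exponential bound constant
  obtain ⟨τm, hτmK, hτmmax⟩ :=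
    isCompact_Icc.exists_isMaxOn (nonempty_Icc.2 hτ₀) hqcont.continuousOn
  set Kc : ℝ := max (q τm / 2) 0 with hKcdef
  have hKc0 : 0 ≤ Kc := le_max_right _ _
  have hKcq : ∀ τ ∈ Icc a τ₀, q τ / 2 ≤ Kc := fun τ hτ =>
    le_trans (by linarith [(isMaxOn_iff.1 hτmmax) τ hτ]) (le_max_left _ _)
  -- the two auxiliary monotone functions
  set φ : ℝ → ℝ := fun τ => Real.exp (Kc * τ) * (g τ - A) with hφdef
  set ψ : ℝ → ℝ := fun τ => Real.exp (Kc * τ) * (g τ + A) with hψdef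
  have hexp : ∀ τ : ℝ, HasDerivAt (fun τ : ℝ => Real.exp (Kc * τ))
      (Real.exp (Kc * τ) * Kc) τ := fun τ => by
    simpa using ((hasDerivAt_id τ).const_mul Kc).exp
  have hφd : ∀ τ : ℝ, 0 < τ → HasDerivAt φ
      (Real.exp (Kc * τ) * Kc * (g τ - A)
        + Real.exp (Kc * τ) * (-(q τ) * d2 (d2 u) (γ τ))) τ := by
    intro τ hτ
    exact (hexp τ).mul ((hg' τ hτ).sub_const A)
  have hψd : ∀ τ : ℝ, 0 < τ → HasDerivAt ψ
      (Real.exp (Kc * τ) * Kc * (g τ + A)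
        + Real.exp (Kc * τ) * (-(q τ) * d2 (d2 u) (γ τ))) τ := by
    intro τ hτ
    exact (hexp τ).mul ((hg' τ hτ).add_const A)
  have hφanti : AntitoneOn φ (Icc a τ₀) := by
    apply antitoneOn_of_deriv_nonpos (convex_Icc a τ₀)
    · exact ((Real.continuous_exp.comp (continuous_const.mul continuous_id)).mul
        (hgcont.sub continuous_const)).continuousOn
    · intro τ hτ
      rw [interior_Icc] at hτ
      exact ((hφd τ (lt_of_le_of_lt ha hτ.1)).differentiableAt).differentiableWithinAt
    · intro τ hτ
      rw [interior_Icc] at hτ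
      have hτpos : 0 < τ := lt_of_le_of_lt ha hτ.1
      rw [(hφd τ hτpos).deriv]
      have hτI : τ ∈ Icc a τ₀ := ⟨le_of_lt hτ.1, le_of_lt hτ.2⟩
      have h1 := hgA τ hτI
      have h2 := hhA τ hτI
      have h3 := hKcq τ hτI
      have h4 := hq0 τ
      have h5 := hgh τ
      have hE : (0:ℝ) < Real.exp (Kc * τ) := Real.exp_pos _
      have habs1 := abs_le.1 h1
      have habs2 := abs_le.1 h2
      have P1 : (0:ℝ) ≤ (Kc - q τ / 2) * (A - g τ) :=
        mul_nonneg (by linarith) (by linarith [habs1.2])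
      have P2 : (0:ℝ) ≤ (q τ / 2) * (A + (d2 (d2 u) (γ τ) - σ * d1 (d2 u) (γ τ))) :=
        mul_nonneg (by linarith) (by linarith [habs2.1])
      have h5q : q τ * (2 * d2 (d2 u) (γ τ))
          = q τ * (g τ + (d2 (d2 u) (γ τ) - σ * d1 (d2 u) (γ τ))) := by rw [h5]
      have hX : Kc * (g τ - A) + (-(q τ) * d2 (d2 u) (γ τ)) ≤ 0 := by
        nlinarith [P1, P2, h5q]
      have hmul := mul_le_mul_of_nonneg_left hX hE.le
      nlinarith [hmul]
  have hψmono : MonotoneOn ψ (Icc a τ₀) := by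
    apply monotoneOn_of_deriv_nonneg (convex_Icc a τ₀)
    · exact ((Real.continuous_exp.comp (continuous_const.mul continuous_id)).mul
        (hgcont.add continuous_const)).continuousOn
    · intro τ hτ
      rw [interior_Icc] at hτ
      exact ((hψd τ (lt_of_le_of_lt ha hτ.1)).differentiableAt).differentiableWithinAt
    · intro τ hτ
      rw [interior_Icc] at hτ
      have hτpos : 0 < τ := lt_of_le_of_lt ha hτ.1
      rw [(hψd τ hτpos).deriv]
      have hτI : τ ∈ Icc a τ₀ := ⟨le_of_lt hτ.1, le_of_lt hτ.2⟩
      have h1 := hgA τ hτI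
      have h2 := hhA τ hτI
      have h3 := hKcq τ hτI
      have h4 := hq0 τ
      have h5 := hgh τ
      have hE : (0:ℝ) < Real.exp (Kc * τ) := Real.exp_pos _
      have habs1 := abs_le.1 h1
      have habs2 := abs_le.1 h2
      have P1 : (0:ℝ) ≤ (Kc - q τ / 2) * (A + g τ) :=
        mul_nonneg (by linarith) (by linarith [habs1.1])
      have P2 : (0:ℝ) ≤ (q τ / 2) * (A - (d2 (d2 u) (γ τ) - σ * d1 (d2 u) (γ τ))) :=
        mul_nonneg (by linarith) (by linarith [habs2.2])
      have h5q : q τ * (2 * d2 (d2 u) (γ τ))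
          = q τ * (g τ + (d2 (d2 u) (γ τ) - σ * d1 (d2 u) (γ τ))) := by rw [h5]
      have hX : 0 ≤ Kc * (g τ + A) + (-(q τ) * d2 (d2 u) (γ τ)) := by
        nlinarith [P1, P2, h5q]
      have hmul := mul_le_mul_of_nonneg_left hX hE.le
      nlinarith [hmul]
  have hφle : φ τ₀ ≤ φ a := hφanti ⟨le_refl a, hτ₀⟩ ⟨hτ₀, le_refl τ₀⟩ hτ₀
  have hψle : ψ a ≤ ψ τ₀ := hψmono ⟨le_refl a, hτ₀⟩ ⟨hτ₀, le_refl τ₀⟩ hτ₀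
  have hγτ₀ : γ τ₀ = (x₀, τ₀) := by rw [hγdef]; simp
  have hA : A = |g τ₀| := by
    rw [hgdef]; simp only [hγτ₀]; rw [hYdef]; exact hend
  have hga : |g a| ≤ Ms := by
    have := hMs (x₀ + σ * (τ₀ - a))
    rw [hgdef, hγdef, hYdef]; exact this
  rcases abs_cases (g τ₀) with ⟨heq1, _⟩ | ⟨heq1, _⟩
  · -- g τ₀ = A
    have hgA' : g τ₀ - A = 0 := by rw [hA, heq1]; ring
    have hφ0 : φ τ₀ = 0 := by
      show Real.exp (Kc * τ₀) * (g τ₀ - A) = 0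
      rw [hgA', mul_zero]
    have h0 : (0:ℝ) ≤ Real.exp (Kc * a) * (g a - A) := by
      have := hφle; rw [hφ0] at this; exact this
    have h1 : (0:ℝ) ≤ g a - A := by
      by_contra hcon
      push_neg at hcon
      nlinarith [Real.exp_pos (Kc * a)]
    linarith [le_abs_self (g a)]
  · -- g τ₀ = -A
    have hgA' : g τ₀ + A = 0 := by rw [hA, heq1]; ring
    have hψ0 : ψ τ₀ = 0 := by
      show Real.exp (Kc * τ₀) * (g τ₀ + A) = 0
      rw [hgA', mul_zero]
    have h0 : Real.exp (Kc * a) * (g a + A) ≤ 0 := by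
      have := hψle; rw [hψ0] at this; exact this
    have h1 : g a + A ≤ 0 := by
      by_contra hcon
      push_neg at hcon
      nlinarith [Real.exp_pos (Kc * a)]
    linarith [neg_abs_le (g a)]

lemma range_eq_image {Y : ℝ × ℝ → ℝ} {R T : ℝ} (hR : 0 < R)
    (hY0 : ∀ x τ : ℝ, R ≤ |x| → 0 ≤ τ → τ ≤ T → Y (x, τ) = 0)
    {τ : ℝ} (h0 : 0 ≤ τ) (h1 : τ ≤ T) :
    Set.range (fun x => |Y (x, τ)|) = (fun x => |Y (x, τ)|) '' Set.Icc (-R) R := by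
  apply Subset.antisymm
  · rintro y ⟨x, rfl⟩
    by_cases hx : |x| ≤ R
    · exact mem_image_of_mem _ (abs_le.1 hx)
    · push_neg at hx
      refine ⟨R, ⟨by linarith, le_refl R⟩, ?_⟩
      simp only
      rw [hY0 R τ (by rw [abs_of_pos hR]) h0 h1, hY0 x τ (le_of_lt hx) h0 h1]
  · rintro y ⟨x, -, rfl⟩; exact mem_range_self x

lemma bdd_range {Y : ℝ × ℝ → ℝ} (hYc : Continuous Y) {R T : ℝ} (hR : 0 < R)
    (hY0 : ∀ x τ : ℝ, R ≤ |x| → 0 ≤ τ → τ ≤ T → Y (x, τ) = 0)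
    {τ : ℝ} (h0 : 0 ≤ τ) (h1 : τ ≤ T) :
    BddAbove (Set.range (fun x => |Y (x, τ)|)) := by
  rw [range_eq_image hR hY0 h0 h1]
  exact (isCompact_Icc.image
    ((hYc.comp (continuous_id.prodMk continuous_const)).abs)).bddAbove

set_option maxHeartbeats 2000000

/-- for the 1D dissipative wave equation, the quantity
`max(sup_x |Y₊(x,t)|, sup_x |Y₋(x,t)|)` with `Y± = (∂ₜ ± ∂ₓ)∂ₜu` is nonincreasing
in `t` on `[0,∞)`. -/
theorem haraux_sup_nonincreasing_1d
    (p : ℝ) (hp : 3 ≤ p)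
    (u : ℝ × ℝ → ℝ) (hu : ContDiff ℝ 3 u)
    (heq : ∀ x t : ℝ, 0 ≤ t →
      d2 (d2 u) (x, t) - d1 (d1 u) (x, t) + |d2 u (x, t)| ^ (p - 1) * d2 u (x, t) = 0)
    (hsupp : ∀ T : ℝ, 0 < T → ∃ R > (0 : ℝ), ∀ x t : ℝ,
      R ≤ |x| → 0 ≤ t → t ≤ T → u (x, t) = 0) :
    AntitoneOn (fun t : ℝ =>
      max (⨆ x : ℝ, |d2 (d2 u) (x, t) + d1 (d2 u) (x, t)|)
          (⨆ x : ℝ, |d2 (d2 u) (x, t) - d1 (d2 u) (x, t)|)) (Set.Ici 0) := by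
  intro a ha b hb hab
  rw [mem_Ici] at ha hb
  obtain ⟨R, hR, hvan⟩ := hsupp (b + 1) (by linarith)
  have hv2 : ContDiff ℝ 2 (d2 u) := d2_contDiff hu (by norm_num)
  have h22 : ContDiff ℝ 1 (d2 (d2 u)) := d2_contDiff hv2 (by norm_num)
  have h12 : ContDiff ℝ 1 (d1 (d2 u)) := d1_contDiff hv2 (by norm_num)
  have hdu : Differentiable ℝ u := hu.differentiable (by norm_num)
  have hdv : Differentiable ℝ (d2 u) := hv2.differentiable (by norm_num)
  -- two sets where everything vanishes
  have hvanish : ∀ (S : Set (ℝ × ℝ)), Convex ℝ S → (interior S).Nonempty →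
      (∀ z ∈ S, u z = 0) → ∀ z ∈ S, d2 (d2 u) z = 0 ∧ d1 (d2 u) z = 0 := by
    intro S hconv hint hu0
    have h1 : ∀ z ∈ S, d2 u z = 0 := fun z hz => vanish_d_s16 hdu hconv hint hu0 hz (0, 1)
    exact fun z hz => ⟨vanish_d_s16 hdv hconv hint h1 hz (0, 1),
      vanish_d_s16 hdv hconv hint h1 hz (1, 0)⟩
  have hzero : ∀ x τ : ℝ, R ≤ |x| → 0 ≤ τ → τ ≤ b + 1 →
      d2 (d2 u) (x, τ) = 0 ∧ d1 (d2 u) (x, τ) = 0 := by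
    intro x τ hx h0 h1
    rcases le_abs.1 hx with hx' | hx'
    · refine hvanish (Ici R ×ˢ Icc 0 (b + 1)) ((convex_Ici R).prod (convex_Icc _ _)) ?_ ?_
        (x, τ) ⟨hx', h0, h1⟩
      · rw [interior_prod_eq, interior_Ici, interior_Icc]
        exact ⟨(R + 1, (b + 1) / 2), Set.mem_prod.2
          ⟨mem_Ioi.2 (by linarith), mem_Ioo.2 ⟨by linarith, by linarith⟩⟩⟩
      · intro z hz
        have := hvan z.1 z.2 (le_trans hz.1 (le_abs_self z.1)) hz.2.1 hz.2.2
        simpa using this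
    · refine hvanish (Iic (-R) ×ˢ Icc 0 (b + 1)) ((convex_Iic _).prod (convex_Icc _ _)) ?_ ?_
        (x, τ) ⟨mem_Iic.2 (by linarith), h0, h1⟩
      · rw [interior_prod_eq, interior_Iic, interior_Icc]
        exact ⟨(-R - 1, (b + 1) / 2), Set.mem_prod.2
          ⟨mem_Iio.2 (by linarith), mem_Ioo.2 ⟨by linarith, by linarith⟩⟩⟩
      · intro z hz
        have hz1 : R ≤ |z.1| := by
          rw [abs_of_nonpos (by linarith [mem_Iic.1 hz.1] : z.1 ≤ 0)]
          linarith [mem_Iic.1 hz.1]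
        have := hvan z.1 z.2 hz1 hz.2.1 hz.2.2
        simpa using this
  set Y1 : ℝ × ℝ → ℝ := fun z => d2 (d2 u) z + d1 (d2 u) z with hY1def
  set Y2 : ℝ × ℝ → ℝ := fun z => d2 (d2 u) z - d1 (d2 u) z with hY2def
  have hY1c : Continuous Y1 := (h22.continuous).add (h12.continuous)
  have hY2c : Continuous Y2 := (h22.continuous).sub (h12.continuous)
  have hY1zero : ∀ x τ : ℝ, R ≤ |x| → 0 ≤ τ → τ ≤ b + 1 → Y1 (x, τ) = 0 := by
    intro x τ hx h0 h1
    obtain ⟨e1, e2⟩ := hzero x τ hx h0 h1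
    rw [hY1def]; simp only; rw [e1, e2, add_zero]
  have hY2zero : ∀ x τ : ℝ, R ≤ |x| → 0 ≤ τ → τ ≤ b + 1 → Y2 (x, τ) = 0 := by
    intro x τ hx h0 h1
    obtain ⟨e1, e2⟩ := hzero x τ hx h0 h1
    rw [hY2def]; simp only; rw [e1, e2, sub_zero]
  -- the maximum of |Y1|, |Y2| over the compact region
  set F : ℝ × ℝ → ℝ := fun z => max |Y1 z| |Y2 z| with hFdef
  have hFc : Continuous F := (hY1c.abs).max (hY2c.abs)
  obtain ⟨z₀, hz₀K, hz₀max⟩ := (isCompact_Icc.prod isCompact_Icc).exists_isMaxOn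
    (((nonempty_Icc (a := -R) (b := R)).2 (by linarith)).prod ((nonempty_Icc).2 hab))
    hFc.continuousOn
  set A : ℝ := F z₀ with hAdef
  have hA0 : 0 ≤ A := le_trans (abs_nonneg (Y1 z₀)) (le_max_left _ _)
  have hz₀1 : z₀.1 ∈ Icc (-R) R := hz₀K.1
  have hz₀2 : z₀.2 ∈ Icc a b := hz₀K.2
  have hFle : ∀ x τ : ℝ, a ≤ τ → τ ≤ b → F (x, τ) ≤ A := by
    intro x τ h0 h1
    by_cases hx : |x| ≤ R
    · exact (isMaxOn_iff.1 hz₀max) (x, τ) ⟨abs_le.1 hx, h0, h1⟩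
    · push_neg at hx
      have e1 := hY1zero x τ (le_of_lt hx) (le_trans ha h0) (by linarith)
      have e2 := hY2zero x τ (le_of_lt hx) (le_trans ha h0) (by linarith)
      rw [hFdef]; simp only [e1, e2, abs_zero, max_self]
      exact hA0
  -- bddAbove facts
  have hbdd1a : BddAbove (Set.range fun x => |Y1 (x, a)|) :=
    bdd_range hY1c hR hY1zero ha (by linarith)
  have hbdd2a : BddAbove (Set.range fun x => |Y2 (x, a)|) :=
    bdd_range hY2c hR hY2zero ha (by linarith)
  -- the suprema at time a bound the characteristic data
  set Ms : ℝ := max (⨆ x : ℝ, |Y1 (x, a)|) (⨆ x : ℝ, |Y2 (x, a)|) with hMsdef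
  have hMs1 : ∀ x : ℝ, |Y1 (x, a)| ≤ Ms := fun x =>
    le_trans (le_csSup hbdd1a (mem_range_self x)) (le_max_left _ _)
  have hMs2 : ∀ x : ℝ, |Y2 (x, a)| ≤ Ms := fun x =>
    le_trans (le_csSup hbdd2a (mem_range_self x)) (le_max_right _ _)
  -- A ≤ Ms by the characteristic argument
  have hAMs : A ≤ Ms := by
    have hAcases : A = |Y1 z₀| ∨ A = |Y2 z₀| := by
      rw [hAdef, hFdef]
      rcases max_cases |Y1 z₀| |Y2 z₀| with ⟨h, -⟩ | ⟨h, -⟩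
      · exact Or.inl h
      · exact Or.inr h
    rcases hAcases with hc | hc
    · refine char_bound p hp u hu heq 1 (by norm_num) a z₀.2 z₀.1 ha hz₀2.1 A Ms hA0
        ?_ ?_ ?_
      · intro x τ h0 h1
        have := hFle x τ h0 (le_trans h1 hz₀2.2)
        rw [hFdef] at this
        simp only [le_max_iff] at this ⊢
        constructor
        · rw [show d2 (d2 u) (x, τ) + 1 * d1 (d2 u) (x, τ) = Y1 (x, τ) by
            rw [hY1def]; ring]
          exact le_trans (le_max_left _ _) this
        · rw [show d2 (d2 u) (x, τ) - 1 * d1 (d2 u) (x, τ) = Y2 (x, τ) by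
            rw [hY2def]; ring]
          exact le_trans (le_max_right _ _) this
      · rw [show d2 (d2 u) (z₀.1, z₀.2) + 1 * d1 (d2 u) (z₀.1, z₀.2) = Y1 z₀ by
          rw [hY1def]; simp]
        exact hc
      · intro x
        rw [show d2 (d2 u) (x, a) + 1 * d1 (d2 u) (x, a) = Y1 (x, a) by
          rw [hY1def]; ring]
        exact hMs1 x
    · refine char_bound p hp u hu heq (-1) (by norm_num) a z₀.2 z₀.1 ha hz₀2.1 A Ms hA0
        ?_ ?_ ?_
      · intro x τ h0 h1
        have := hFle x τ h0 (le_trans h1 hz₀2.2)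
        rw [hFdef] at this
        simp only [le_max_iff] at this ⊢
        constructor
        · rw [show d2 (d2 u) (x, τ) + (-1) * d1 (d2 u) (x, τ) = Y2 (x, τ) by
            rw [hY2def]; ring]
          exact le_trans (le_max_right _ _) this
        · rw [show d2 (d2 u) (x, τ) - (-1) * d1 (d2 u) (x, τ) = Y1 (x, τ) by
            rw [hY1def]; ring]
          exact le_trans (le_max_left _ _) this
      · rw [show d2 (d2 u) (z₀.1, z₀.2) + (-1) * d1 (d2 u) (z₀.1, z₀.2) = Y2 z₀ by
          rw [hY2def]; simp; ring]
        exact hc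
      · intro x
        rw [show d2 (d2 u) (x, a) + (-1) * d1 (d2 u) (x, a) = Y2 (x, a) by
          rw [hY2def]; ring]
        exact hMs2 x
  -- the suprema at time b are bounded by A
  have hsup1b : (⨆ x : ℝ, |Y1 (x, b)|) ≤ A := by
    rw [← sSup_range, range_eq_image hR hY1zero hb (by linarith)]
    apply csSup_le (((nonempty_Icc).2 (by linarith : -R ≤ R)).image _)
    rintro y ⟨x, -, rfl⟩
    exact le_trans (le_trans (le_max_left _ _) (le_refl (F (x, b)))) (hFle x b hab le_rfl)
  have hsup2b : (⨆ x : ℝ, |Y2 (x, b)|) ≤ A := by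
    rw [← sSup_range, range_eq_image hR hY2zero hb (by linarith)]
    apply csSup_le (((nonempty_Icc).2 (by linarith : -R ≤ R)).image _)
    rintro y ⟨x, -, rfl⟩
    exact le_trans (le_trans (le_max_right _ _) (le_refl (F (x, b)))) (hFle x b hab le_rfl)
  show max (⨆ x : ℝ, |Y1 (x, b)|) (⨆ x : ℝ, |Y2 (x, b)|) ≤ Ms
  exact max_le (le_trans hsup1b hAMs) (le_trans hsup2b hAMs)
end
end
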